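/- arXiv:2106.06570 — 4 statements merged into one kernel-verified Lean document; each statement's English description precedes it below -/
import Mathlib

section
/- Let R be a commutative ring, I an ideal of R such that the R-module R/I has finite length n, m a maximal ideal of R, and φ : I → R/m a surjective R-module homomorphism. Then the kernel J = ker(φ) is an ideal of R contained in I such that I/J is isomorphic to R/m as an R-module and R/J has length n+1. -/
/-- The length of a module, i.e. the supremum of lengths of chains of submodules. -/
noncomputable def moduleLength (R M : Type*) [Ring R] [AddCommGroup M] [Module R M] : ℕ∞ :=
  Order.height (⊤ : Submodule R M)

/-- Any strictly increasing series in a product order has length bounded by the sum of the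
heights of the components of its last element. -/
lemma LTSeries.length_le_height_add {α β : Type*} [Preorder α] [Preorder β]
    (p : LTSeries (α × β)) :
    (p.length : ℕ∞) ≤ Order.height p.last.1 + Order.height p.last.2 := by
  suffices H : ∀ (k : ℕ) (p : LTSeries (α × β)), p.length = k →
      (p.length : ℕ∞) ≤ Order.height p.last.1 + Order.height p.last.2 from
    H p.length p rfl
  intro k
  induction k with
  | zero => intro p hp; simp [hp]
  | succ k ih =>
    intro p hn
    have hne : p.length ≠ 0 := by omega
    have hlt : p.eraseLast.last < p.last := p.eraseLast_last_rel_last hne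
    have hlen' : p.eraseLast.length = k := by
      simp only [RelSeries.eraseLast_length]; omega
    have IH := ih p.eraseLast hlen'
    rw [hlen'] at IH
    rw [hn]
    have hcast : ((k + 1 : ℕ) : ℕ∞) = (k : ℕ∞) + 1 := by push_cast; ring
    rcases Prod.lt_iff.mp hlt with ⟨h1, h2⟩ | ⟨h1, h2⟩
    · by_cases htop : Order.height p.eraseLast.last.1 = ⊤
      · have : Order.height p.last.1 = ⊤ :=
          top_le_iff.mp (htop ▸ Order.height_mono h1.le)
        rw [this]; simp
      · have hstep : Order.height p.eraseLast.last.1 + 1 ≤ Order.height p.last.1 :=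
          Order.add_one_le_of_lt (Order.height_strictMono h1 (lt_top_iff_ne_top.mpr htop))
        calc ((k + 1 : ℕ) : ℕ∞) = (k : ℕ∞) + 1 := hcast
          _ ≤ (Order.height p.eraseLast.last.1 + Order.height p.eraseLast.last.2) + 1 :=
              add_le_add_left IH 1
          _ = (Order.height p.eraseLast.last.1 + 1) + Order.height p.eraseLast.last.2 := by
              ring
          _ ≤ Order.height p.last.1 + Order.height p.last.2 := by
              gcongr
    · by_cases htop : Order.height p.eraseLast.last.2 = ⊤
      · have : Order.height p.last.2 = ⊤ :=
          top_le_iff.mp (htop ▸ Order.height_mono h2.le)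
        rw [this]; simp
      · have hstep : Order.height p.eraseLast.last.2 + 1 ≤ Order.height p.last.2 :=
          Order.add_one_le_of_lt (Order.height_strictMono h2 (lt_top_iff_ne_top.mpr htop))
        calc ((k + 1 : ℕ) : ℕ∞) = (k : ℕ∞) + 1 := hcast
          _ ≤ (Order.height p.eraseLast.last.1 + Order.height p.eraseLast.last.2) + 1 :=
              add_le_add_left IH 1
          _ = Order.height p.eraseLast.last.1 + (Order.height p.eraseLast.last.2 + 1) := by
              ring
          _ ≤ Order.height p.last.1 + Order.height p.last.2 := by
              gcongr

lemma Order.height_prod_le {α β : Type*} [Preorder α] [Preorder β] (x : α × β) :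
    Order.height x ≤ Order.height x.1 + Order.height x.2 :=
  Order.height_le fun p hp => hp ▸ LTSeries.length_le_height_add p

lemma Order.height_eq_one_of_isAtom {α : Type*} [PartialOrder α] [OrderBot α] {a : α}
    (h : IsAtom a) : Order.height a = 1 := by
  apply le_antisymm
  · have : Order.height a ≤ ((1 : ℕ) : ℕ∞) := by
      rw [Order.height_le_coe_iff]
      intro y hy
      rw [h.2 y hy]
      simp
    simpa using this
  · rw [ENat.one_le_iff_ne_zero]
    intro h0
    have := Order.height_eq_zero.mp h0
    exact absurd (this (bot_le (a := a))) (by simpa using h.1)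

/-- elementary transformations. Let `R` be a commutative ring, `I` an ideal
with `R/I` of finite length `n`, `m` a maximal ideal, and `φ : I → R/m` a surjective `R`-module
map.  Then `J = ker φ` is an ideal of `R` contained in `I`, with `I/J ≅ R/m` as `R`-modules and
`R/J` of length `n + 1`. -/
theorem kernel_of_surjection_onto_residue_field
    (R : Type*) [CommRing R] (I : Ideal R) (n : ℕ)
    (hlen : moduleLength R (R ⧸ I) = n)
    (m : Ideal R) (hm : m.IsMaximal)
    (φ : ↥I →ₗ[R] R ⧸ m) (hφ : Function.Surjective φ) :
    ∀ J : Ideal R, J = Submodule.map I.subtype (LinearMap.ker φ) →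
      J ≤ I ∧
      Nonempty ((↥I ⧸ Submodule.comap I.subtype J) ≃ₗ[R] R ⧸ m) ∧
      moduleLength R (R ⧸ J) = n + 1 := by
  intro J hJ
  have hJI : J ≤ I := by
    rw [hJ]; exact Submodule.map_subtype_le I (LinearMap.ker φ)
  have hcomap : Submodule.comap I.subtype J = LinearMap.ker φ := by
    rw [hJ]; exact Submodule.comap_map_eq_of_injective I.injective_subtype _
  -- the isomorphism I/J ≅ R/m
  have e1 : (↥I ⧸ Submodule.comap I.subtype J) ≃ₗ[R] R ⧸ m :=
    (Submodule.quotEquivOfEq _ _ hcomap) ≪≫ₗ (φ.quotKerEquivOfSurjective hφ)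
  refine ⟨hJI, ⟨e1⟩, ?_⟩
  -- the canonical surjection f : R/J → R/I
  have hle : J ≤ Submodule.comap LinearMap.id I := by simpa using hJI
  set f : (R ⧸ J) →ₗ[R] R ⧸ I := Submodule.mapQ J I LinearMap.id hle with hf
  have hf_surj : Function.Surjective f := by
    intro x
    obtain ⟨y, rfl⟩ := Submodule.Quotient.mk_surjective I x
    exact ⟨Submodule.Quotient.mk y, rfl⟩
  -- K = I/J as a submodule of R/J
  set u : ↥I →ₗ[R] R ⧸ J := J.mkQ.comp I.subtype with hu
  set K : Submodule R (R ⧸ J) := LinearMap.range u with hK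
  have hker_u : LinearMap.ker u = LinearMap.ker φ := by
    rw [hu, LinearMap.ker_comp, Submodule.ker_mkQ, hcomap]
  have eK : (↥I ⧸ LinearMap.ker φ) ≃ₗ[R] ↥K := by
    rw [← hker_u]; exact u.quotKerEquivRange
  haveI : IsSimpleModule R (R ⧸ m) := isSimpleModule_iff_isCoatom.mpr hm.out
  haveI hKsimple : IsSimpleModule R (↥K) :=
    IsSimpleModule.congr (eK.symm ≪≫ₗ φ.quotKerEquivOfSurjective hφ)
  have hatom : IsAtom K := isSimpleModule_iff_isAtom.mp hKsimple
  -- kernel of f is K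
  have hK_ker : LinearMap.ker f = K := by
    ext x
    obtain ⟨y, rfl⟩ := Submodule.Quotient.mk_surjective J x
    simp only [LinearMap.mem_ker, hf, Submodule.mapQ_apply, LinearMap.id_apply,
      Submodule.Quotient.mk_eq_zero, hK, LinearMap.mem_range, hu, LinearMap.comp_apply,
      Submodule.mkQ_apply]
    constructor
    · intro hy
      exact ⟨⟨y, hy⟩, rfl⟩
    · rintro ⟨a, ha⟩
      have : (a : R) - y ∈ J := (Submodule.Quotient.eq J).mp ha
      have h2 : (a : R) - ((a : R) - y) ∈ I := I.sub_mem a.2 (hJI this)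
      simpa using h2
  -- Upper bound via the strictly monotone map A ↦ (A.map f, A ⊓ K)
  have hg : StrictMono (fun A : Submodule R (R ⧸ J) => (A.map f, A ⊓ K)) := by
    intro A B hAB
    refine lt_of_le_of_ne ⟨Submodule.map_mono hAB.le, inf_le_inf_right _ hAB.le⟩ ?_
    intro heq
    obtain ⟨h1, h2⟩ := Prod.ext_iff.mp heq
    dsimp only at h1 h2
    apply hAB.ne
    refine le_antisymm hAB.le fun b hb => ?_
    have hfb : f b ∈ A.map f := h1 ▸ Submodule.mem_map_of_mem hb
    obtain ⟨a, haA, hfa⟩ := hfb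
    have hsub : b - a ∈ K := by
      rw [← hK_ker]
      simp [LinearMap.mem_ker, map_sub, hfa]
    have hmem : b - a ∈ A ⊓ K := by
      rw [h2]; exact ⟨B.sub_mem hb (hAB.le haA), hsub⟩
    have := A.add_mem haA hmem.1
    simpa using this
  have hub : moduleLength R (R ⧸ J) ≤ (n : ℕ∞) + 1 := by
    have h1 := Order.height_le_height_apply_of_strictMono _ hg (⊤ : Submodule R (R ⧸ J))
    have h2 := Order.height_prod_le ((⊤ : Submodule R (R ⧸ J)).map f, ⊤ ⊓ K)
    have htop1 : (⊤ : Submodule R (R ⧸ J)).map f = ⊤ := by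
      rw [Submodule.map_top, LinearMap.range_eq_top]; exact hf_surj
    have htop2 : (⊤ : Submodule R (R ⧸ J)) ⊓ K = K := top_inf_eq K
    rw [htop1, htop2] at h2
    calc moduleLength R (R ⧸ J) ≤ _ := h1
      _ ≤ Order.height (⊤ : Submodule R (R ⧸ I)) + Order.height K := by
          simpa [htop1, htop2] using h2
      _ = (n : ℕ∞) + 1 := by
          rw [Order.height_eq_one_of_isAtom hatom]
          exact congrArg (· + 1) hlen
  -- Lower bound: pull back a maximal chain and prepend ⊥
  have hlb : (n : ℕ∞) + 1 ≤ moduleLength R (R ⧸ J) := by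
    obtain ⟨p, hplast, hplen⟩ :=
      Order.exists_series_of_height_eq_coe (⊤ : Submodule R (R ⧸ I)) hlen
    have hmono : Monotone (Submodule.comap f) := fun _ _ h => Submodule.comap_mono h
    have hcm : StrictMono (Submodule.comap f) :=
      hmono.strictMono_of_injective (Submodule.comap_injective_of_surjective hf_surj)
    set q := p.map (Submodule.comap f) hcm with hq
    have hq_head : (⊥ : Submodule R (R ⧸ J)) < q.head := by
      have hKle : K ≤ q.head := by
        rw [hq]
        have : K = Submodule.comap f ⊥ := by rw [Submodule.comap_bot, hK_ker]
        rw [this]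
        exact Submodule.comap_mono bot_le
      exact lt_of_lt_of_le hatom.1.bot_lt hKle
    set q' := q.cons ⊥ hq_head with hq'
    have hlast : q'.last = ⊤ := by
      rw [hq', RelSeries.last_cons, hq]
      show Submodule.comap f p.last = ⊤
      rw [hplast, Submodule.comap_top]
    have hlen' : q'.length = n + 1 := by
      rw [hq', RelSeries.cons_length, hq]
      show p.length + 1 = n + 1
      omega
    have := Order.length_le_height_last (p := q')
    rw [hlast, hlen'] at this
    calc ((n : ℕ∞) + 1) = ((n + 1 : ℕ) : ℕ∞) := by push_cast; ring
      _ ≤ Order.height (⊤ : Submodule R (R ⧸ J)) := this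
      _ = moduleLength R (R ⧸ J) := rfl
  exact le_antisymm hub hlb
end

section
/- Let R = ℂ[x,y] and m = (x,y). Fix integers d ≥ 1 and 1 ≤ j ≤ d, and arbitrary coefficients c_{i,i'} ∈ ℂ for 0 ≤ i ≤ d−j and d−j+1 ≤ i' ≤ d. Let I be the ideal of R generated by m^{d+1} together with the d+1−j polynomials f_i = x^{d−i} y^{i} + Σ_{i'=d−j+1}^{d} c_{i,i'} x^{d−i'} y^{i'} for 0 ≤ i ≤ d−j. Then m^{d+1} ⊆ I ⊆ m^{d}, and dim_ℂ(ℂ[x,y]/I) = d(d+1)/2 + j. -/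
open MvPolynomial

noncomputable section

namespace ColengthAux

abbrev Rp := MvPolynomial (Fin 2) ℂ

def E (a b : ℕ) : Fin 2 →₀ ℕ := Finsupp.single 0 a + Finsupp.single 1 b

@[simp] lemma E_apply0 (a b : ℕ) : E a b 0 = a := by
  simp [E, Finsupp.single_apply]

@[simp] lemma E_apply1 (a b : ℕ) : E a b 1 = b := by
  simp [E, Finsupp.single_apply]

lemma E_inj {a b a' b' : ℕ} (h : E a b = E a' b') : a = a' ∧ b = b' := by
  constructor
  · have := congrArg (fun n => n 0) h; simpa using this
  · have := congrArg (fun n => n 1) h; simpa using this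

lemma eq_E (n : Fin 2 →₀ ℕ) : n = E (n 0) (n 1) := by
  ext a
  fin_cases a <;> simp

def deg (n : Fin 2 →₀ ℕ) : ℕ := n 0 + n 1

@[simp] lemma deg_E (a b : ℕ) : deg (E a b) = a + b := by simp [deg]

lemma deg_eq_zero {n : Fin 2 →₀ ℕ} (h : deg n = 0) : n = 0 := by
  have h0 : n 0 = 0 := by unfold deg at h; omega
  have h1 : n 1 = 0 := by unfold deg at h; omega
  rw [eq_E n, h0, h1]
  simp [E]

def M (a b : ℕ) : Rp := monomial (E a b) 1

lemma X_pow_mul_eq (a b : ℕ) : (X 0 : Rp) ^ a * X 1 ^ b = M a b := by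
  rw [X_pow_eq_monomial, X_pow_eq_monomial, monomial_mul, one_mul]
  rfl

lemma coeff_M (n : Fin 2 →₀ ℕ) (a b : ℕ) :
    coeff n (M a b) = if E a b = n then 1 else 0 := by
  simp [M, coeff_monomial]

def Lc (n : Fin 2 →₀ ℕ) : Rp →ₗ[ℂ] ℂ where
  toFun p := coeff n p
  map_add' p q := coeff_add n p q
  map_smul' r p := coeff_smul n r p

@[simp] lemma Lc_apply (n : Fin 2 →₀ ℕ) (p : Rp) : Lc n p = coeff n p := rfl

def K (k : ℕ) : Ideal Rp where
  carrier := {p | ∀ n, deg n < k → coeff n p = 0}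
  zero_mem' := by intro n _; simp
  add_mem' := by
    intro p q hp hq n hn
    rw [coeff_add, hp n hn, hq n hn, add_zero]
  smul_mem' := by
    intro r p hp n hn
    rw [smul_eq_mul, coeff_mul]
    refine Finset.sum_eq_zero ?_
    rintro ⟨u, v⟩ huv
    rw [Finset.HasAntidiagonal.mem_antidiagonal] at huv
    have h0 := congrArg (fun f : Fin 2 →₀ ℕ => f 0) huv
    have h1 := congrArg (fun f : Fin 2 →₀ ℕ => f 1) huv
    simp only [Finsupp.add_apply] at h0 h1
    have hv : deg v < k := by unfold deg at hn ⊢; omega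
    rw [hp v hv, mul_zero]

lemma mem_K {k : ℕ} {p : Rp} : p ∈ K k ↔ ∀ n, deg n < k → coeff n p = 0 := Iff.rfl

lemma span_X_le_K1 : Ideal.span {(X 0 : Rp), X 1} ≤ K 1 := by
  rw [Ideal.span_le]
  rintro p hp
  rcases hp with rfl | rfl <;>
  · intro n hn
    have hn0 : n = 0 := deg_eq_zero (Nat.lt_one_iff.mp hn)
    subst hn0
    simp [coeff_X']

lemma K_mul_le (a b : ℕ) : K a * K b ≤ K (a + b) := by
  rw [Ideal.mul_le]
  intro p hp q hq n hn
  rw [coeff_mul]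
  refine Finset.sum_eq_zero ?_
  rintro ⟨u, v⟩ huv
  rw [Finset.HasAntidiagonal.mem_antidiagonal] at huv
  have h0 := congrArg (fun f : Fin 2 →₀ ℕ => f 0) huv
  have h1 := congrArg (fun f : Fin 2 →₀ ℕ => f 1) huv
  simp only [Finsupp.add_apply] at h0 h1
  have : deg u < a ∨ deg v < b := by unfold deg at hn ⊢; omega
  rcases this with h | h
  · rw [hp u h, zero_mul]
  · rw [hq v h, mul_zero]

lemma pow_span_le_K (k : ℕ) : Ideal.span {(X 0 : Rp), X 1} ^ k ≤ K k := by
  induction k with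
  | zero => intro p _ n hn; exact absurd hn (Nat.not_lt_zero _)
  | succ k ih =>
    calc Ideal.span {(X 0 : Rp), X 1} ^ (k + 1)
        = Ideal.span {(X 0 : Rp), X 1} ^ k * Ideal.span {(X 0 : Rp), X 1} := pow_succ _ _
      _ ≤ K k * K 1 := Ideal.mul_mono ih span_X_le_K1
      _ ≤ K (k + 1) := K_mul_le k 1

lemma coeff_mul_of_K {p : Rp} {dd : ℕ} (hp : p ∈ K dd) (r : Rp) {n : Fin 2 →₀ ℕ}
    (hn : deg n = dd) : coeff n (r * p) = coeff 0 r * coeff n p := by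
  rw [coeff_mul, Finset.sum_eq_single ((0 : Fin 2 →₀ ℕ), n)]
  · rintro ⟨u, v⟩ huv hne
    rw [Finset.HasAntidiagonal.mem_antidiagonal] at huv
    by_cases hv : deg v < dd
    · rw [hp v hv, mul_zero]
    · exfalso
      apply hne
      have h0 := congrArg (fun f : Fin 2 →₀ ℕ => f 0) huv
      have h1 := congrArg (fun f : Fin 2 →₀ ℕ => f 1) huv
      simp only [Finsupp.add_apply] at h0 h1
      have hu : deg u = 0 := by unfold deg at hn hv ⊢; omega
      have hu0 : u = 0 := deg_eq_zero hu
      subst hu0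
      rw [zero_add] at huv
      exact congrArg (Prod.mk 0) huv
  · intro h
    exact absurd (Finset.HasAntidiagonal.mem_antidiagonal.mpr (zero_add n)) h

lemma M_mem_pow {a b k : ℕ} (h : k ≤ a + b) :
    M a b ∈ Ideal.span {(X 0 : Rp), X 1} ^ k := by
  rw [← X_pow_mul_eq]
  have h0 : (X 0 : Rp) ∈ Ideal.span {(X 0 : Rp), X 1} :=
    Ideal.subset_span (by simp)
  have h1 : (X 1 : Rp) ∈ Ideal.span {(X 0 : Rp), X 1} :=
    Ideal.subset_span (by simp)
  have hab : (X 0 : Rp) ^ a * X 1 ^ b ∈ Ideal.span {(X 0 : Rp), X 1} ^ (a + b) := by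
    rw [pow_add]
    exact Ideal.mul_mem_mul (Ideal.pow_mem_pow h0 a) (Ideal.pow_mem_pow h1 b)
  exact Ideal.pow_le_pow_right h hab




variable (d j : ℕ) (c : ℕ → ℕ → ℂ)

def f (i : ℕ) : Rp :=
  M (d - i) i + ∑ i' ∈ Finset.Icc (d - j + 1) d, c i i' • M (d - i') i'

lemma f_eq_gen (i : ℕ) :
    (X 0 : Rp) ^ (d - i) * X 1 ^ i +
      ∑ i' ∈ Finset.Icc (d - j + 1) d, C (c i i') * X 0 ^ (d - i') * X 1 ^ i' = f d j c i := by
  unfold f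
  congr 1
  · exact X_pow_mul_eq _ _
  · refine Finset.sum_congr rfl fun i' _ => ?_
    rw [mul_assoc, X_pow_mul_eq, ← smul_eq_C_mul]

lemma coeff_f (n : Fin 2 →₀ ℕ) (i : ℕ) :
    coeff n (f d j c i) =
      (if E (d - i) i = n then 1 else 0) +
        ∑ i' ∈ Finset.Icc (d - j + 1) d, c i i' * (if E (d - i') i' = n then 1 else 0) := by
  unfold f M
  rw [coeff_add, coeff_sum, coeff_monomial]
  congr 1
  refine Finset.sum_congr rfl fun i' _ => ?_
  rw [coeff_smul, coeff_monomial, smul_eq_mul]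

lemma f_coeff_low (hjd : j ≤ d) {n : Fin 2 →₀ ℕ} (hn : deg n < d) {i : ℕ} (hi : i ≤ d - j) :
    coeff n (f d j c i) = 0 := by
  rw [coeff_f]
  have hi' : i ≤ d := le_trans hi (Nat.sub_le d j)
  have h1 : ¬(E (d - i) i = n) := by
    intro h
    rw [← h, deg_E] at hn
    omega
  rw [if_neg h1, zero_add]
  refine Finset.sum_eq_zero fun i' hI => ?_
  rw [Finset.mem_Icc] at hI
  have h2 : ¬(E (d - i') i' = n) := by
    intro h
    rw [← h, deg_E] at hn
    omega
  rw [if_neg h2, mul_zero]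

lemma f_mem_K (hjd : j ≤ d) {i : ℕ} (hi : i ≤ d - j) : f d j c i ∈ K d :=
  fun n hn => f_coeff_low d j c hjd hn hi

lemma coeff_f_at (hjd : j ≤ d) {i : ℕ} (hi : i ≤ d - j) {b : ℕ} (hb : b ≤ d) :
    coeff (E (d - b) b) (f d j c i) =
      (if b = i then 1 else 0) + (if d - j + 1 ≤ b then c i b else 0) := by
  rw [coeff_f]
  have hi' : i ≤ d := le_trans hi (Nat.sub_le d j)
  congr 1
  · have e1 : (E (d - i) i = E (d - b) b) ↔ b = i := by
      constructor
      · intro h; exact ((E_inj h).2).symm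
      · rintro rfl; rfl
    exact if_congr e1 rfl rfl
  · by_cases hbI : d - j + 1 ≤ b
    · rw [if_pos hbI, Finset.sum_eq_single b]
      · rw [if_pos rfl, mul_one]
      · intro i'' hI hne
        rw [Finset.mem_Icc] at hI
        have : ¬(E (d - i'') i'' = E (d - b) b) := by
          intro h
          exact hne (E_inj h).2
        rw [if_neg this, mul_zero]
      · intro habs
        exact absurd (Finset.mem_Icc.mpr ⟨hbI, hb⟩) habs
    · rw [if_neg hbI]
      refine Finset.sum_eq_zero fun i'' hI => ?_
      rw [Finset.mem_Icc] at hI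
      have : ¬(E (d - i'') i'' = E (d - b) b) := by
        intro h
        have := (E_inj h).2
        omega
      rw [if_neg this, mul_zero]

def Lf (a b : ℕ) : Rp →ₗ[ℂ] ℂ :=
  if a + b < d then Lc (E a b)
  else Lc (E a b) - ∑ i ∈ Finset.range (d - j + 1), c i b • Lc (E (d - i) i)

lemma Lf_low {a b : ℕ} (h : a + b < d) (p : Rp) : Lf d j c a b p = coeff (E a b) p := by
  rw [Lf, if_pos h]; rfl

lemma Lf_high {a b : ℕ} (h : ¬ a + b < d) (p : Rp) :
    Lf d j c a b p =
      coeff (E a b) p - ∑ i ∈ Finset.range (d - j + 1), c i b * coeff (E (d - i) i) p := by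
  rw [Lf, if_neg h]
  simp [Lc]

-- Lf vanishes on I
lemma Lf_f (hjd : j ≤ d) {i : ℕ} (hi : i ≤ d - j) {b : ℕ} (hb1 : d - j + 1 ≤ b) (hb2 : b ≤ d) :
    Lf d j c (d - b) b (f d j c i) = 0 := by
  have hdb : ¬ (d - b) + b < d := by omega
  rw [Lf_high d j c hdb]
  have h1 : coeff (E (d - b) b) (f d j c i) = c i b := by
    rw [coeff_f_at d j c hjd hi hb2, if_neg (by omega), if_pos hb1, zero_add]
  have h2 : ∀ i'' ∈ Finset.range (d - j + 1),
      c i'' b * coeff (E (d - i'') i'') (f d j c i) = if i'' = i then c i b else 0 := by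
    intro i'' hI
    rw [Finset.mem_range] at hI
    have hi'' : i'' ≤ d - j := by omega
    rw [coeff_f_at d j c hjd hi (by omega : i'' ≤ d),
      if_neg (show ¬(d - j + 1 ≤ i'') by omega), add_zero]
    by_cases h : i'' = i
    · subst h; rw [if_pos rfl, if_pos rfl, mul_one]
    · rw [if_neg h, if_neg h, mul_zero]
  rw [h1, Finset.sum_congr rfl h2, Finset.sum_ite_eq' (Finset.range (d - j + 1)) i
    (fun _ => c i b), if_pos (Finset.mem_range.mpr (by omega)), sub_self]

-- the invariant predicate on elements of the span of the f's
def Good (p : Rp) : Prop :=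
  p ∈ K d ∧ ∀ b, d - j + 1 ≤ b → b ≤ d → Lf d j c (d - b) b p = 0

lemma good_f (hjd : j ≤ d) {i : ℕ} (hi : i ≤ d - j) : Good d j c (f d j c i) :=
  ⟨f_mem_K d j c hjd hi, fun _ hb1 hb2 => Lf_f d j c hjd hi hb1 hb2⟩

lemma good_zero : Good d j c 0 := by
  refine ⟨Ideal.zero_mem _, fun b _ _ => ?_⟩
  rw [map_zero]

lemma good_add {p q : Rp} (hp : Good d j c p) (hq : Good d j c q) : Good d j c (p + q) := by
  refine ⟨Ideal.add_mem _ hp.1 hq.1, fun b hb1 hb2 => ?_⟩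
  rw [map_add, hp.2 b hb1 hb2, hq.2 b hb1 hb2, add_zero]

lemma good_smul (r : Rp) {p : Rp} (hp : Good d j c p) : Good d j c (r • p) := by
  refine ⟨by rw [smul_eq_mul]; exact Ideal.mul_mem_left _ r hp.1, fun b hb1 hb2 => ?_⟩
  have hdb : ¬ (d - b) + b < d := by omega
  rw [smul_eq_mul, Lf_high d j c hdb,
    coeff_mul_of_K hp.1 r (by rw [deg_E]; omega)]
  have h2 : ∀ i'' ∈ Finset.range (d - j + 1),
      c i'' b * coeff (E (d - i'') i'') (r * p) =
        coeff 0 r * (c i'' b * coeff (E (d - i'') i'') p) := by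
    intro i'' hI
    rw [Finset.mem_range] at hI
    rw [coeff_mul_of_K hp.1 r (by rw [deg_E]; omega)]
    ring
  rw [Finset.sum_congr rfl h2, ← Finset.mul_sum, ← mul_sub]
  have := hp.2 b hb1 hb2
  rw [Lf_high d j c hdb] at this
  rw [this, mul_zero]

-- the ideal I
def Ifull : Ideal Rp :=
  Ideal.span {(X 0 : Rp), X 1} ^ (d + 1) ⊔ Ideal.span
    ((fun i : ℕ => X 0 ^ (d - i) * X 1 ^ i +
        ∑ i' ∈ Finset.Icc (d - j + 1) d, C (c i i') * X 0 ^ (d - i') * X 1 ^ i') ''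
      Set.Iic (d - j))

lemma vanish (hjd : j ≤ d) {p : Rp} (hp : p ∈ Ifull d j c) :
    ∀ a b : ℕ, (a + b < d ∨ (d - j + 1 ≤ b ∧ b ≤ d ∧ a = d - b)) →
      Lf d j c a b p = 0 := by
  obtain ⟨q, hq, r, hr, rfl⟩ := Submodule.mem_sup.mp hp
  have hqK : q ∈ K (d + 1) := pow_span_le_K (d + 1) hq
  have hrG : Good d j c r := by
    refine Submodule.span_induction ?_ (good_zero d j c) (fun x y _ _ hx hy => good_add d j c hx hy)
      (fun a x _ hx => good_smul d j c a hx) hr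
    rintro x ⟨i, hi, rfl⟩
    rw [Set.mem_Iic] at hi
    have := good_f d j c hjd hi
    rwa [← f_eq_gen] at this
  intro a b hab
  rw [map_add]
  rcases hab with h | ⟨hb1, hb2, rfl⟩
  · rw [Lf_low d j c h, Lf_low d j c h, hqK _ (by rw [deg_E]; omega),
      hrG.1 _ (by rw [deg_E]; omega), add_zero]
  · have hdb : ¬ (d - b) + b < d := by omega
    have hq0 : Lf d j c (d - b) b q = 0 := by
      rw [Lf_high d j c hdb, hqK _ (by rw [deg_E]; omega)]
      rw [Finset.sum_eq_zero, sub_zero]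
      intro i'' hI
      rw [Finset.mem_range] at hI
      rw [hqK _ (by rw [deg_E]; omega), mul_zero]
    rw [hq0, hrG.2 b hb1 hb2, add_zero]

def lowS (d : ℕ) : Finset (ℕ × ℕ) := (Finset.range d).biUnion (fun k => Finset.HasAntidiagonal.antidiagonal k)

lemma mem_lowS {d : ℕ} {t : ℕ × ℕ} : t ∈ lowS d ↔ t.1 + t.2 < d := by
  simp only [lowS, Finset.mem_biUnion, Finset.mem_range, Finset.HasAntidiagonal.mem_antidiagonal]
  constructor
  · rintro ⟨k, hk, hh⟩; omega
  · intro h; exact ⟨t.1 + t.2, h, rfl⟩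

def highS (d j : ℕ) : Finset (ℕ × ℕ) :=
  (Finset.Icc (d - j + 1) d).image (fun b => (d - b, b))

lemma mem_highS {d j : ℕ} {t : ℕ × ℕ} :
    t ∈ highS d j ↔ d - j + 1 ≤ t.2 ∧ t.2 ≤ d ∧ t.1 = d - t.2 := by
  simp only [highS, Finset.mem_image, Finset.mem_Icc]
  constructor
  · rintro ⟨b, ⟨hb1, hb2⟩, rfl⟩; exact ⟨hb1, hb2, rfl⟩
  · rintro ⟨h1, h2, h3⟩
    exact ⟨t.2, ⟨h1, h2⟩, by rw [← h3]⟩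

def S (d j : ℕ) : Finset (ℕ × ℕ) := lowS d ∪ highS d j

lemma mem_S {d j : ℕ} {t : ℕ × ℕ} :
    t ∈ S d j ↔ t.1 + t.2 < d ∨ (d - j + 1 ≤ t.2 ∧ t.2 ≤ d ∧ t.1 = d - t.2) := by
  rw [S, Finset.mem_union, mem_lowS, mem_highS]

lemma card_lowS (d : ℕ) : (lowS d).card = d * (d + 1) / 2 := by
  rw [lowS, Finset.card_biUnion]
  · have h1 : ∀ k ∈ Finset.range d, (Finset.HasAntidiagonal.antidiagonal k).card = k + 1 := by
      intro k _; exact Finset.Nat.card_antidiagonal k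
    rw [Finset.sum_congr rfl h1]
    have h2 : ∑ k ∈ Finset.range (d + 1), k = (∑ k ∈ Finset.range d, (k + 1)) + 0 :=
      Finset.sum_range_succ' id d
    have h3 := Finset.sum_range_id (d + 1)
    have h4 : (d + 1) * (d + 1 - 1) = d * (d + 1) := by
      rw [Nat.add_sub_cancel, Nat.mul_comm]
    rw [h4] at h3
    omega
  · intro x _ y _ hxy
    rw [Function.onFun, Finset.disjoint_left]
    intro t ht ht'
    rw [Finset.HasAntidiagonal.mem_antidiagonal] at ht ht'
    exact hxy (ht ▸ ht')

lemma card_S (d j : ℕ) (hjd : j ≤ d) : (S d j).card = d * (d + 1) / 2 + j := by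
  rw [S, Finset.card_union_of_disjoint, card_lowS]
  · congr 1
    rw [highS, Finset.card_image_of_injOn, Nat.card_Icc]
    · omega
    · intro x _ y _ hxy
      exact (Prod.mk.injEq _ _ _ _).mp hxy |>.2
  · rw [Finset.disjoint_left]
    intro t ht ht'
    rw [mem_lowS] at ht
    rw [mem_highS] at ht'
    omega

-- δ-lemma: value of Lf on basis monomials
lemma mem_S' {d j a b : ℕ} :
    (a, b) ∈ S d j ↔ a + b < d ∨ (d - j + 1 ≤ b ∧ b ≤ d ∧ a = d - b) := mem_S

lemma Lf_M (hjd : j ≤ d) {a b a' b' : ℕ} (ht : (a, b) ∈ S d j) (ht' : (a', b') ∈ S d j) :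
    Lf d j c a' b' (M a b) = if (a, b) = (a', b') then 1 else 0 := by
  rw [mem_S'] at ht ht'
  rcases ht' with h' | ⟨h1', h2', rfl⟩
  · -- low functional
    rw [Lf_low d j c h', coeff_M]
    rcases ht with h | ⟨h1, h2, rfl⟩
    · congr 1
      · rw [eq_iff_iff]
        constructor
        · intro he
          have := E_inj he
          rw [Prod.mk.injEq]
          exact this
        · rw [Prod.mk.injEq]
          rintro ⟨rfl, rfl⟩; rfl
      -- congr handles branches
    · rw [if_neg, if_neg]
      · rw [Prod.mk.injEq]
        rintro ⟨rfl, rfl⟩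
        omega
      · intro he
        have := E_inj he
        omega
  · -- high functional, at (d - b', b')
    have hd' : ¬ (d - b') + b' < d := by omega
    rw [Lf_high d j c hd', coeff_M]
    have hsum : ∀ i'' ∈ Finset.range (d - j + 1),
        c i'' b' * coeff (E (d - i'') i'') (M a b) = if a = d - i'' ∧ b = i'' then c i'' b' else 0 := by
      intro i'' hI
      rw [coeff_M]
      by_cases h : E a b = E (d - i'') i''
      · have := E_inj h
        rw [if_pos h, if_pos ⟨this.1, this.2⟩, mul_one]
      · rw [if_neg h, if_neg, mul_zero]
        rintro ⟨rfl, rfl⟩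
        exact h rfl
    rw [Finset.sum_congr rfl hsum]
    rcases ht with h | ⟨h1, h2, rfl⟩
    · -- (a,b) low: everything vanishes
      rw [if_neg, if_neg, Finset.sum_eq_zero, sub_zero]
      · intro i'' hI
        rw [Finset.mem_range] at hI
        rw [if_neg]
        rintro ⟨rfl, rfl⟩
        omega
      · rw [Prod.mk.injEq]
        rintro ⟨rfl, rfl⟩
        omega
      · intro he
        have := E_inj he
        omega
    · -- (a,b) = (d-b, b) high
      rw [Finset.sum_eq_zero, sub_zero]
      · congr 1
        rw [eq_iff_iff]
        constructor
        · intro he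
          have := E_inj he
          rw [Prod.mk.injEq]
          refine ⟨this.1, this.2⟩
        · rw [Prod.mk.injEq]
          rintro ⟨h3, rfl⟩; rfl
      · intro i'' hI
        rw [Finset.mem_range] at hI
        rw [if_neg]
        rintro ⟨-, rfl⟩
        omega

lemma finrank_quot (hjd : j ≤ d) :
    Module.finrank ℂ (Rp ⧸ Ifull d j c) = d * (d + 1) / 2 + j := by
  set I := Ifull d j c with hIdef
  let mkL : Rp →ₗ[ℂ] Rp ⧸ I := (Ideal.Quotient.mkₐ ℂ I).toLinearMap
  let v : {t // t ∈ S d j} → Rp ⧸ I := fun t => mkL (M t.1.1 t.1.2)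
  have hval : ∀ (t t' : {t // t ∈ S d j}),
      Lf d j c t'.1.1 t'.1.2 (M t.1.1 t.1.2) = if t = t' then 1 else 0 := by
    intro t t'
    have ht : (t.1.1, t.1.2) ∈ S d j := by rw [Prod.mk.eta]; exact t.2
    have ht' : (t'.1.1, t'.1.2) ∈ S d j := by rw [Prod.mk.eta]; exact t'.2
    rw [Lf_M d j c hjd ht ht']
    congr 1
    rw [eq_iff_iff]
    constructor
    · intro h
      refine Subtype.ext ?_
      rw [← Prod.mk.eta (p := t.1), ← Prod.mk.eta (p := t'.1)]
      exact h
    · rintro rfl; rfl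
  have hli : LinearIndependent ℂ v := by
    rw [Fintype.linearIndependent_iff]
    intro g hg t'
    set P : Rp := ∑ t : {t // t ∈ S d j}, g t • M t.1.1 t.1.2 with hP
    have hmk : mkL P = 0 := by
      rw [hP, map_sum]
      have : ∀ t : {t // t ∈ S d j}, mkL (g t • M t.1.1 t.1.2) = g t • v t := fun t =>
        map_smul mkL (g t) _
      rw [Finset.sum_congr rfl fun t _ => this t]
      exact hg
    have hPI : P ∈ I := by
      have : Ideal.Quotient.mk I P = 0 := hmk
      rwa [Ideal.Quotient.eq_zero_iff_mem] at this
    have h0 := vanish d j c hjd hPI t'.1.1 t'.1.2 (mem_S.mp t'.2)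
    have hLfP : Lf d j c t'.1.1 t'.1.2 P = g t' := by
      have hterm : ∀ t : {t // t ∈ S d j},
          Lf d j c t'.1.1 t'.1.2 (g t • M t.1.1 t.1.2) = if t = t' then g t else 0 := by
        intro t
        rw [map_smul, hval t t', smul_eq_mul]
        by_cases h : t = t' <;> simp [h]
      rw [hP, map_sum, Finset.sum_congr rfl fun t _ => hterm t,
        Finset.sum_ite_eq' Finset.univ t' g, if_pos (Finset.mem_univ _)]
    rw [← hLfP]
    exact h0
  have hsp : ⊤ ≤ Submodule.span ℂ (Set.range v) := by
    have key : ∀ a b : ℕ, mkL (M a b) ∈ Submodule.span ℂ (Set.range v) := by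
      intro a b
      rcases lt_trichotomy (a + b) d with hlt | heq | hgt
      · exact Submodule.subset_span ⟨⟨(a, b), mem_S'.mpr (Or.inl hlt)⟩, rfl⟩
      · by_cases hb : d - j + 1 ≤ b
        · exact Submodule.subset_span
            ⟨⟨(a, b), mem_S'.mpr (Or.inr ⟨hb, by omega, by omega⟩)⟩, rfl⟩
        · have hb' : b ≤ d - j := by omega
          have ha : a = d - b := by omega
          have hfI : f d j c b ∈ I := by
            rw [hIdef]
            exact Submodule.mem_sup_right (Ideal.subset_span ⟨b, Set.mem_Iic.mpr hb', f_eq_gen d j c b⟩)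
          have hM : M a b =
              f d j c b - ∑ i' ∈ Finset.Icc (d - j + 1) d, c b i' • M (d - i') i' := by
            rw [ha]; unfold f; ring
          rw [hM, map_sub, map_sum]
          refine sub_mem ?_ (Submodule.sum_mem _ fun i' hi' => ?_)
          · rw [show mkL (f d j c b) = 0 from Ideal.Quotient.eq_zero_iff_mem.mpr hfI]
            exact Submodule.zero_mem _
          · rw [map_smul]
            refine Submodule.smul_mem _ _ (Submodule.subset_span ?_)
            rw [Finset.mem_Icc] at hi'
            exact ⟨⟨(d - i', i'), mem_S'.mpr (Or.inr ⟨hi'.1, hi'.2, rfl⟩)⟩, rfl⟩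
      · have hmem : M a b ∈ I := by
          rw [hIdef]
          exact Submodule.mem_sup_left (M_mem_pow (by omega))
        rw [show mkL (M a b) = 0 from Ideal.Quotient.eq_zero_iff_mem.mpr hmem]
        exact Submodule.zero_mem _
    intro x _
    obtain ⟨p, rfl⟩ := Ideal.Quotient.mk_surjective x
    rw [show (Ideal.Quotient.mk I p) = mkL p from rfl]
    have hps : mkL p = ∑ n ∈ p.support, mkL ((monomial n) (coeff n p)) := by
      conv_lhs => rw [MvPolynomial.as_sum p]
      rw [map_sum]
    rw [hps]
    refine Submodule.sum_mem _ fun n hn => ?_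
    have hmono : (monomial n) (coeff n p) = coeff n p • M (n 0) (n 1) := by
      rw [M, ← eq_E n, smul_monomial, smul_eq_mul, mul_one]
    rw [hmono, map_smul]
    exact Submodule.smul_mem _ _ (key (n 0) (n 1))
  have hB := Module.Basis.mk hli hsp
  rw [Module.finrank_eq_card_basis hB, Fintype.card_coe, card_S d j hjd]

end ColengthAux

open ColengthAux in
/-- In `R = ℂ[x,y]` with `m = (x,y)`, fix `d ≥ 1`, `1 ≤ j ≤ d`, and
coefficients `c i i'` for `0 ≤ i ≤ d-j`, `d-j+1 ≤ i' ≤ d`.  Let `I` be the ideal generated by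
`m^(d+1)` together with the polynomials
`f i = x^(d-i) y^i + ∑_{i'=d-j+1}^{d} c i i' • x^(d-i') y^(i')` for `0 ≤ i ≤ d-j`.
Then `m^(d+1) ⊆ I ⊆ m^d` and `dim_ℂ (ℂ[x,y]/I) = d(d+1)/2 + j`. -/
theorem colength_of_graded_step_ideal
    (d j : ℕ) (hd : 1 ≤ d) (hj : 1 ≤ j) (hjd : j ≤ d)
    (c : ℕ → ℕ → ℂ) :
    ∀ (m I : Ideal (MvPolynomial (Fin 2) ℂ)),
      m = Ideal.span {X 0, X 1} →
      I = m ^ (d + 1) ⊔ Ideal.span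
          ((fun i : ℕ => X 0 ^ (d - i) * X 1 ^ i +
              ∑ i' ∈ Finset.Icc (d - j + 1) d, C (c i i') * X 0 ^ (d - i') * X 1 ^ i') ''
            Set.Iic (d - j)) →
      m ^ (d + 1) ≤ I ∧ I ≤ m ^ d ∧
        Module.finrank ℂ (MvPolynomial (Fin 2) ℂ ⧸ I) = d * (d + 1) / 2 + j := by
  intro m I hm hI
  subst hm
  subst hI
  refine ⟨le_sup_left, ?_, ?_⟩
  · apply sup_le
    · exact Ideal.pow_le_pow_right (Nat.le_succ d)
    · rw [Ideal.span_le]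
      rintro p ⟨i, hi, rfl⟩
      simp only [Set.mem_Iic] at hi
      have hid : i ≤ d := le_trans hi (Nat.sub_le d j)
      show _ + _ ∈ _
      apply Ideal.add_mem
      · rw [X_pow_mul_eq]
        exact M_mem_pow (by omega)
      · refine Ideal.sum_mem _ fun i' hi' => ?_
        rw [Finset.mem_Icc] at hi'
        rw [mul_assoc, X_pow_mul_eq]
        exact Ideal.mul_mem_left _ _ (M_mem_pow (by omega))
  · exact finrank_quot d j c hjd
end
end

section
/- Let R = ℂ[x,y] and m = (x,y). Fix integers d ≥ 1 and 1 ≤ j ≤ d−1. Let I be the ideal generated by m^{d+1} and the polynomials f_i = x^{d−i} y^{i} + Σ_{i'=d−j+1}^{d} c_{i,i'} x^{d−i'} y^{i'} for 0 ≤ i ≤ d−j, with arbitrary coefficients c_{i,i'} ∈ ℂ. Then for every choice of complex numbers a_0, …, a_{d−j−1} there exist unique complex numbers b_{i,i'} (for 0 ≤ i ≤ d−j−1 and d−j+1 ≤ i' ≤ d), namely b_{i,i'} = c_{i,i'} + a_i · c_{d−j,i'}, such that the ideal I' generated by m^{d+1} together with the polynomials g_i = x^{d−i} y^{i} + a_i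 x^{j} y^{d−j} + Σ_{i'=d−j+1}^{d} b_{i,i'} x^{d−i'} y^{i'} for 0 ≤ i ≤ d−j−1 is contained in I; moreover dim_ℂ(I/I') = 1. -/
open MvPolynomial Finset

namespace Stmt12
noncomputable section

abbrev R2 : Type := MvPolynomial (Fin 2) ℂ

def ev (d i : ℕ) : Fin 2 →₀ ℕ := Finsupp.single 0 (d - i) + Finsupp.single 1 i

lemma ev_inj {d i k : ℕ} (h : ev d k = ev d i) : k = i := by
  have h1 := DFunLike.congr_fun h 1
  simpa [ev, Finsupp.single_apply] using h1

lemma degree_fin2 (e : Fin 2 →₀ ℕ) : e.degree = e 0 + e 1 := by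
  rw [Finsupp.degree_apply, Finset.sum_subset (Finset.subset_univ e.support)]
  · exact Fin.sum_univ_two e
  · intro x _ hx; simpa using Finsupp.notMem_support_iff.mp hx

lemma degree_add (u v : Fin 2 →₀ ℕ) : (u + v).degree = u.degree + v.degree := by
  simp [degree_fin2]; ring

lemma ev_degree {d i : ℕ} (hi : i ≤ d) : (ev d i).degree = d := by
  simp [ev, degree_fin2, Finsupp.single_apply]; omega

def mon (d i : ℕ) : R2 := monomial (ev d i) 1

lemma mon_eq (d i : ℕ) : (X 0 : R2) ^ (d - i) * X 1 ^ i = mon d i := by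
  rw [mon, ev, X_pow_eq_monomial, X_pow_eq_monomial, monomial_mul, one_mul]

lemma coeff_mon (d i k : ℕ) : coeff (ev d k) (mon d i) = if k = i then 1 else 0 := by
  by_cases h : k = i
  · subst h; simp [mon, coeff_monomial]
  · rw [mon, coeff_monomial, if_neg (fun he => h (ev_inj he.symm)), if_neg h]

lemma mon_mem {d i : ℕ} (hi : i ≤ d) : mon d i ∈ homogeneousSubmodule (Fin 2) ℂ d :=
  (mem_homogeneousSubmodule _ _).2 (isHomogeneous_monomial 1 (ev_degree hi))
/-- The ideal of polynomials whose coefficients vanish in degrees `< n`. -/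
def Kdeg (n : ℕ) : Ideal R2 where
  carrier := {p | ∀ e : Fin 2 →₀ ℕ, e.degree < n → coeff e p = 0}
  add_mem' := fun ha hb e he => by rw [coeff_add, ha e he, hb e he, add_zero]
  zero_mem' := fun e _ => coeff_zero e
  smul_mem' := fun r p hp e he => by
    rw [smul_eq_mul, coeff_mul]
    apply Finset.sum_eq_zero
    rintro ⟨u, v⟩ huv
    have huv' : u + v = e := Finset.HasAntidiagonal.mem_antidiagonal.mp huv
    have hv : v.degree ≤ e.degree := by
      rw [← huv', degree_add]; omega
    rw [hp v (lt_of_le_of_lt hv he), mul_zero]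

lemma constCoeff_mem {b : R2} (hb : b ∈ (Ideal.span {X 0, X 1} : Ideal R2)) :
    constantCoeff b = 0 := by
  have : (Ideal.span {X 0, X 1} : Ideal R2) ≤ RingHom.ker constantCoeff := by
    rw [Ideal.span_le]
    rintro x (rfl | rfl) <;> simp [RingHom.mem_ker]
  exact this hb

lemma pow_le_Kdeg (n : ℕ) : (Ideal.span {X 0, X 1} : Ideal R2) ^ n ≤ Kdeg n := by
  induction n with
  | zero => exact fun p _ e he => absurd he (Nat.not_lt_zero _)
  | succ n ih =>
    rw [pow_succ]
    refine Ideal.mul_le.mpr fun r hr b hb => ?_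
    intro e he
    rw [coeff_mul]
    apply Finset.sum_eq_zero
    rintro ⟨u, v⟩ huv
    have huv' : u + v = e := Finset.HasAntidiagonal.mem_antidiagonal.mp huv
    by_cases hv : v = 0
    · have hb0 : coeff 0 b = 0 := by
        rw [← constantCoeff_eq]; exact constCoeff_mem hb
      subst hv; rw [hb0, mul_zero]
    · have hvd : 1 ≤ v.degree := by
        rcases Nat.eq_zero_or_pos v.degree with h | h
        · exact absurd ((Finsupp.degree_eq_zero_iff v).mp h) hv
        · exact h
      have : u.degree < n := by
        have hda := degree_add u v
        rw [huv'] at hda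
        omega
      rw [ih hr u this, zero_mul]

lemma mem_span_X_of_constantCoeff {p : R2} (hp : constantCoeff p = 0) :
    p ∈ (Ideal.span {X 0, X 1} : Ideal R2) := by
  have hset : ({X 0, X 1} : Set R2) = X '' Set.univ := by
    ext q
    constructor
    · rintro (rfl | rfl) <;> exact ⟨_, Set.mem_univ _, rfl⟩
    · rintro ⟨i, -, rfl⟩
      fin_cases i
      · exact Or.inl rfl
      · exact Or.inr rfl
  rw [hset, mem_ideal_span_X_image]
  intro e he
  have he0 : e ≠ 0 := by
    rintro rfl
    rw [constantCoeff_eq] at hp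
    exact (mem_support_iff.mp he) hp
  obtain ⟨i, hi⟩ : ∃ i, e i ≠ 0 := by
    by_contra h
    push_neg at h
    exact he0 (Finsupp.ext h)
  exact ⟨i, Set.mem_univ _, hi⟩

lemma homog_mem_pow {d : ℕ} {p : R2} (hp : p ∈ homogeneousSubmodule (Fin 2) ℂ d) :
    p ∈ (Ideal.span {X 0, X 1} : Ideal R2) ^ d := by
  have hX0 : (X 0 : R2) ∈ Ideal.span {X 0, X 1} := Ideal.subset_span (Or.inl rfl)
  have hX1 : (X 1 : R2) ∈ Ideal.span {X 0, X 1} := Ideal.subset_span (Or.inr rfl)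
  rw [as_sum p]
  apply Ideal.sum_mem
  intro v hv
  have hdeg : v.degree = d := by
    have := (mem_homogeneousSubmodule _ _).mp hp
    by_contra h
    exact (mem_support_iff.mp hv) (this.coeff_eq_zero h)
  have hvsplit : v = Finsupp.single 0 (v 0) + Finsupp.single 1 (v 1) := by
    ext i
    fin_cases i <;> simp [Finsupp.single_apply]
  have hmon : monomial v (coeff v p) = C (coeff v p) * ((X 0 : R2) ^ (v 0) * X 1 ^ (v 1)) := by
    rw [X_pow_eq_monomial, X_pow_eq_monomial, monomial_mul, one_mul, C_mul_monomial, mul_one,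
      ← hvsplit]
  rw [hmon]
  apply Ideal.mul_mem_left
  have hd : d = v 0 + v 1 := by rw [← hdeg, degree_fin2]
  rw [hd, pow_add]
  exact Ideal.mul_mem_mul (Ideal.pow_mem_pow hX0 _) (Ideal.pow_mem_pow hX1 _)

lemma hc_mul {dd : ℕ} {g : R2} (hg : g ∈ homogeneousSubmodule (Fin 2) ℂ dd) (r : R2) :
    (homogeneousComponent dd) (r * g) = C (constantCoeff r) * g := by
  have hgh := (mem_homogeneousSubmodule _ _).mp hg
  ext e
  rw [coeff_homogeneousComponent, coeff_C_mul]
  by_cases he : e.degree = dd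
  · rw [if_pos he, coeff_mul]
    rw [Finset.sum_eq_single ((0 : Fin 2 →₀ ℕ), e)]
    · rw [← constantCoeff_eq]
    · rintro ⟨u, v⟩ huv hne
      have huv' : u + v = e := Finset.HasAntidiagonal.mem_antidiagonal.mp huv
      by_cases hv : coeff v g = 0
      · rw [hv, mul_zero]
      · have hvd : v.degree = dd := by
          by_contra h
          exact hv (hgh.coeff_eq_zero h)
        have hu0 : u.degree = 0 := by
          have := degree_add u v
          rw [huv'] at this
          omega
        have hu : u = 0 := (Finsupp.degree_eq_zero_iff u).mp hu0
        subst hu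
        rw [zero_add] at huv'
        exact absurd (by rw [huv']) hne
    · intro h
      exact absurd (Finset.HasAntidiagonal.mem_antidiagonal.mpr (zero_add e)) h
  · rw [if_neg he, hgh.coeff_eq_zero he, mul_zero]

lemma hc_zero_of_pow {n dd : ℕ} (hdd : dd < n) {q : R2}
    (hq : q ∈ (Ideal.span {X 0, X 1} : Ideal R2) ^ n) :
    (homogeneousComponent dd) q = 0 := by
  have hk := pow_le_Kdeg n hq
  ext e
  rw [coeff_homogeneousComponent, coeff_zero]
  by_cases he : e.degree = dd
  · rw [if_pos he]
    exact hk e (by omega)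
  · rw [if_neg he]

lemma hc_span {dd : ℕ} {s : Set R2} (hs : ∀ g ∈ s, g ∈ homogeneousSubmodule (Fin 2) ℂ dd)
    {p : R2} (hp : p ∈ Ideal.span s) :
    (homogeneousComponent dd) p ∈ Submodule.span ℂ s := by
  rw [Ideal.span, Submodule.mem_span_set] at hp
  obtain ⟨co, hsupp, rfl⟩ := hp
  rw [Finsupp.sum, map_sum]
  apply Submodule.sum_mem
  intro g hg
  have hgs : g ∈ s := hsupp hg
  rw [smul_eq_mul, hc_mul (hs g hgs), ← smul_eq_C_mul]
  exact Submodule.smul_mem _ _ (Submodule.subset_span hgs)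

lemma hc_sup {dd n : ℕ} (hdd : dd < n) {s : Set R2}
    (hs : ∀ g ∈ s, g ∈ homogeneousSubmodule (Fin 2) ℂ dd) {p : R2}
    (hp : p ∈ (Ideal.span {X 0, X 1} : Ideal R2) ^ n ⊔ Ideal.span s) :
    (homogeneousComponent dd) p ∈ Submodule.span ℂ s := by
  rw [Submodule.mem_sup] at hp
  obtain ⟨q, hq, r, hr, rfl⟩ := hp
  rw [map_add, hc_zero_of_pow hdd hq, zero_add]
  exact hc_span hs hr

lemma span_repr {M : Type*} [AddCommMonoid M] {S : Type*} [Semiring S] [Module S M]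
    (n : ℕ) (F : ℕ → M) {v : M} (hv : v ∈ Submodule.span S (F '' Set.Iic n)) :
    ∃ lam : ℕ → S, v = ∑ i ∈ Finset.Iic n, lam i • F i := by
  rw [Finsupp.mem_span_image_iff_linearCombination] at hv
  obtain ⟨l, hl, rfl⟩ := hv
  refine ⟨l, ?_⟩
  rw [Finsupp.linearCombination_apply, Finsupp.sum]
  refine Finset.sum_subset ?_ ?_
  · intro i hi
    exact Finset.mem_Iic.mpr (hl hi)
  · intro i _ hi
    rw [Finsupp.notMem_support_iff.mp hi, zero_smul]

variable (d j : ℕ)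

def ff (c : ℕ → ℕ → ℂ) (i : ℕ) : R2 :=
  mon d i + ∑ i' ∈ Finset.Icc (d - j + 1) d, C (c i i') * mon d i'

def gg (a : ℕ → ℂ) (b : ℕ → ℕ → ℂ) (i : ℕ) : R2 :=
  mon d i + C (a i) * mon d (d - j) + ∑ i' ∈ Finset.Icc (d - j + 1) d, C (b i i') * mon d i'

lemma ff_fun (c : ℕ → ℕ → ℂ) :
    (fun i : ℕ => (X 0 : R2) ^ (d - i) * X 1 ^ i +
        ∑ i' ∈ Finset.Icc (d - j + 1) d, C (c i i') * X 0 ^ (d - i') * X 1 ^ i') = ff d j c := by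
  funext i
  rw [ff, mon_eq]
  congr 1
  refine Finset.sum_congr rfl fun i' _ => ?_
  rw [mul_assoc, mon_eq]

lemma gg_fun (hjd : j ≤ d) (a : ℕ → ℂ) (b : ℕ → ℕ → ℂ) :
    (fun i : ℕ => (X 0 : R2) ^ (d - i) * X 1 ^ i + C (a i) * X 0 ^ j * X 1 ^ (d - j) +
        ∑ i' ∈ Finset.Icc (d - j + 1) d, C (b i i') * X 0 ^ (d - i') * X 1 ^ i') = gg d j a b := by
  funext i
  rw [gg, mon_eq]
  have hj' : d - (d - j) = j := by omega
  rw [show (X 0 : R2) ^ j = X 0 ^ (d - (d - j)) by rw [hj'], mul_assoc, mon_eq]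
  congr 1
  refine Finset.sum_congr rfl fun i' _ => ?_
  rw [mul_assoc, mon_eq]

lemma ff_mem (hjd : 1 ≤ j) (c : ℕ → ℕ → ℂ) {i : ℕ} (hi : i ≤ d) :
    ff d j c i ∈ homogeneousSubmodule (Fin 2) ℂ d := by
  refine Submodule.add_mem _ (mon_mem hi) (Submodule.sum_mem _ fun i' hi' => ?_)
  rw [C_mul', ]
  exact Submodule.smul_mem _ _ (mon_mem (Finset.mem_Icc.mp hi').2)

lemma gg_mem (hjd : j ≤ d) (a : ℕ → ℂ) (b : ℕ → ℕ → ℂ) {i : ℕ} (hi : i ≤ d) :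
    gg d j a b i ∈ homogeneousSubmodule (Fin 2) ℂ d := by
  refine Submodule.add_mem _ (Submodule.add_mem _ (mon_mem hi) ?_)
    (Submodule.sum_mem _ fun i' hi' => ?_)
  · rw [C_mul']
    exact Submodule.smul_mem _ _ (mon_mem (by omega))
  · rw [C_mul']
    exact Submodule.smul_mem _ _ (mon_mem (Finset.mem_Icc.mp hi').2)

lemma coeff_ff_low (c : ℕ → ℕ → ℂ) (i : ℕ) {k : ℕ} (hk : k ≤ d - j) :
    coeff (ev d k) (ff d j c i) = if k = i then 1 else 0 := by
  rw [ff, coeff_add, coeff_mon, coeff_sum, Finset.sum_eq_zero, add_zero]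
  intro i' hi'
  have hi'' := Finset.mem_Icc.mp hi'
  rw [coeff_C_mul, coeff_mon, if_neg (by omega), mul_zero]

lemma coeff_ff_high (c : ℕ → ℕ → ℂ) {i k : ℕ} (hi : i ≤ d - j)
    (hk : k ∈ Finset.Icc (d - j + 1) d) :
    coeff (ev d k) (ff d j c i) = c i k := by
  have hk' := Finset.mem_Icc.mp hk
  rw [ff, coeff_add, coeff_mon, if_neg (by omega), coeff_sum, zero_add]
  rw [Finset.sum_eq_single_of_mem k hk]
  · rw [coeff_C_mul, coeff_mon, if_pos rfl, mul_one]
  · intro i' hi' hne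
    rw [coeff_C_mul, coeff_mon, if_neg (fun h => hne h.symm), mul_zero]

lemma coeff_gg_low (a : ℕ → ℂ) (b : ℕ → ℕ → ℂ) (i : ℕ) {k : ℕ} (hk : k ≤ d - j) :
    coeff (ev d k) (gg d j a b i) =
      (if k = i then 1 else 0) + a i * (if k = d - j then 1 else 0) := by
  rw [gg, coeff_add, coeff_add, coeff_mon, coeff_C_mul, coeff_mon, coeff_sum,
    Finset.sum_eq_zero, add_zero]
  intro i' hi'
  have hi'' := Finset.mem_Icc.mp hi'
  rw [coeff_C_mul, coeff_mon, if_neg (by omega), mul_zero]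

lemma coeff_gg_high (a : ℕ → ℂ) (b : ℕ → ℕ → ℂ) {i k : ℕ} (hi : i < d - j)
    (hk : k ∈ Finset.Icc (d - j + 1) d) :
    coeff (ev d k) (gg d j a b i) = b i k := by
  have hk' := Finset.mem_Icc.mp hk
  rw [gg, coeff_add, coeff_add, coeff_mon, if_neg (by omega), coeff_C_mul, coeff_mon,
    if_neg (by omega), mul_zero, add_zero, zero_add, coeff_sum]
  rw [Finset.sum_eq_single_of_mem k hk]
  · rw [coeff_C_mul, coeff_mon, if_pos rfl, mul_one]
  · intro i' hi' hne
    rw [coeff_C_mul, coeff_mon, if_neg (fun h => hne h.symm), mul_zero]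

lemma gg_b0 (a : ℕ → ℂ) (c : ℕ → ℕ → ℂ) (i : ℕ) :
    gg d j a (fun i i' => c i i' + a i * c (d - j) i') i
      = ff d j c i + C (a i) * ff d j c (d - j) := by
  rw [gg, ff, ff, mul_add, Finset.mul_sum]
  simp only [map_add, map_mul, add_mul]
  rw [Finset.sum_add_distrib]
  have h1 : ∀ i' ∈ Finset.Icc (d - j + 1) d,
      C (a i) * (C (c (d - j) i') * mon d i') = C (a i) * C (c (d - j) i') * mon d i' :=
    fun i' _ => by ring
  rw [Finset.sum_congr rfl h1]
  ring
lemma coeff_sum_smul (e : Fin 2 →₀ ℕ) (s : Finset ℕ) (lam : ℕ → ℂ) (H : ℕ → R2) :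
    coeff e (∑ m ∈ s, lam m • H m) = ∑ m ∈ s, lam m * coeff e (H m) := by
  rw [coeff_sum]
  exact Finset.sum_congr rfl fun m _ => by rw [coeff_smul, smul_eq_mul]

lemma sum_delta (n k : ℕ) (hk : k ∈ Finset.Iic n) (lam : ℕ → ℂ) :
    ∑ m ∈ Finset.Iic n, lam m * (if k = m then 1 else 0) = lam k := by
  rw [Finset.sum_eq_single_of_mem k hk]
  · rw [if_pos rfl, mul_one]
  · intro m _ hne
    rw [if_neg (fun h => hne h.symm), mul_zero]

lemma sum_two_delta (n i k : ℕ) (hi : i ∈ Finset.Iic n) (hk : k ∈ Finset.Iic n) (hik : i ≠ k)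
    (z : ℂ) (f : ℕ → ℂ) :
    ∑ m ∈ Finset.Iic n, ((if m = i then 1 else 0) + z * (if m = k then 1 else 0)) * f m
      = f i + z * f k := by
  have : ∀ m ∈ Finset.Iic n,
      ((if m = i then (1:ℂ) else 0) + z * (if m = k then 1 else 0)) * f m
        = (if m = i then f m else 0) + z * (if m = k then f m else 0) := by
    intro m _
    by_cases h1 : m = i <;> by_cases h2 : m = k <;> simp [h1, h2, hik, Ne.symm hik] <;> ring
  rw [Finset.sum_congr rfl this, Finset.sum_add_distrib, ← Finset.mul_sum,
    Finset.sum_ite_eq' (Finset.Iic n) i f, Finset.sum_ite_eq' (Finset.Iic n) k f,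
    if_pos hi, if_pos hk]

lemma sum_Iic_top {M : Type*} [AddCommMonoid M] (n : ℕ) (hn : 1 ≤ n) (f : ℕ → M) :
    ∑ m ∈ Finset.Iic n, f m = (∑ m ∈ Finset.Iic (n - 1), f m) + f n := by
  have h : Finset.Iic n = insert n (Finset.Iic (n - 1)) := by
    ext x
    simp only [Finset.mem_Iic, Finset.mem_insert]
    omega
  rw [h, Finset.sum_insert (by simp only [Finset.mem_Iic]; omega), add_comm]

end
end Stmt12

open Stmt12 in
set_option maxHeartbeats 1000000 in
set_option synthInstance.maxHeartbeats 1000000 in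
/-- In `R = ℂ[x,y]` with `m = (x,y)`, fix `d ≥ 1`, `1 ≤ j ≤ d-1`,
coefficients `c i i'`, and let `I` be the ideal generated by `m^(d+1)` and the polynomials
`f i = x^(d-i) y^i + ∑_{i'=d-j+1}^{d} c i i' x^(d-i') y^(i')` for `0 ≤ i ≤ d-j`.
Then for every choice `a_0, …, a_(d-j-1)` of complex numbers there exist unique complex
numbers `b i i'` (for `0 ≤ i ≤ d-j-1`, `d-j+1 ≤ i' ≤ d`), namely
`b i i' = c i i' + a i * c (d-j) i'`, such that the ideal `I'` generated by `m^(d+1)` and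
`g i = x^(d-i) y^i + a i • x^j y^(d-j) + ∑_{i'} b i i' • x^(d-i') y^(i')` for
`0 ≤ i ≤ d-j-1` is contained in `I`; moreover `dim_ℂ (I/I') = 1`. -/
theorem unique_coefficients_of_next_step_ideal
    (d j : ℕ) (hd : 1 ≤ d) (hj : 1 ≤ j) (hjd : j ≤ d - 1)
    (c : ℕ → ℕ → ℂ) :
    ∀ (m I : Ideal (MvPolynomial (Fin 2) ℂ)),
      m = Ideal.span {X 0, X 1} →
      I = m ^ (d + 1) ⊔ Ideal.span
          ((fun i : ℕ => X 0 ^ (d - i) * X 1 ^ i +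
              ∑ i' ∈ Finset.Icc (d - j + 1) d, C (c i i') * X 0 ^ (d - i') * X 1 ^ i') ''
            Set.Iic (d - j)) →
      ∀ a : ℕ → ℂ,
        let I' : (ℕ → ℕ → ℂ) → Ideal (MvPolynomial (Fin 2) ℂ) := fun b =>
          m ^ (d + 1) ⊔ Ideal.span
            ((fun i : ℕ => X 0 ^ (d - i) * X 1 ^ i + C (a i) * X 0 ^ j * X 1 ^ (d - j) +
                ∑ i' ∈ Finset.Icc (d - j + 1) d, C (b i i') * X 0 ^ (d - i') * X 1 ^ i') ''
              Set.Iic (d - j - 1))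
        let b₀ : ℕ → ℕ → ℂ := fun i i' => c i i' + a i * c (d - j) i'
        I' b₀ ≤ I ∧
        Module.finrank ℂ (↥I ⧸ Submodule.comap I.subtype (I' b₀)) = 1 ∧
        ∀ b : ℕ → ℕ → ℂ, I' b ≤ I →
          ∀ i ≤ d - j - 1, ∀ i' ∈ Finset.Icc (d - j + 1) d,
            b i i' = c i i' + a i * c (d - j) i' := by
  intro m I hm hI a I' b₀
  have hjd' : j ≤ d := by omega
  have hdj1 : 1 ≤ d - j := by omega
  subst hm
  rw [Stmt12.ff_fun d j c] at hI
  have hI'def : I' = fun b => Ideal.span {X 0, X 1} ^ (d + 1) ⊔ Ideal.span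
      ((fun i : ℕ => X 0 ^ (d - i) * X 1 ^ i + C (a i) * X 0 ^ j * X 1 ^ (d - j) +
          ∑ i' ∈ Finset.Icc (d - j + 1) d, C (b i i') * X 0 ^ (d - i') * X 1 ^ i') ''
        Set.Iic (d - j - 1)) := rfl
  have hb₀def : b₀ = fun i i' => c i i' + a i * c (d - j) i' := rfl
  have hI'eq : ∀ b, I' b = Ideal.span {X 0, X 1} ^ (d + 1) ⊔
      Ideal.span (Stmt12.gg d j a b '' Set.Iic (d - j - 1)) := by
    intro b
    rw [hI'def, ← Stmt12.gg_fun d j hjd' a b]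
  set F : ℕ → R2 := Stmt12.ff d j c with hF
  set G : ℕ → R2 := Stmt12.gg d j a b₀ with hG
  have hGm : ∀ i, G i = F i + C (a i) * F (d - j) := by
    intro i
    rw [hG, hb₀def, hF]
    exact Stmt12.gg_b0 d j a c i
  have hffI : ∀ i ≤ d - j, F i ∈ I := by
    intro i hi
    rw [hI]
    exact Ideal.mem_sup_right (Ideal.subset_span ⟨i, hi, rfl⟩)
  -- Part 1
  have part1 : I' b₀ ≤ I := by
    rw [hI'eq b₀, hI]
    refine sup_le le_sup_left ?_
    rw [Ideal.span_le]
    rintro x ⟨i, hi, rfl⟩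
    have hi' : i ≤ d - j - 1 := hi
    rw [← hG, hGm i]
    exact Ideal.add_mem _
      (Ideal.mem_sup_right (Ideal.subset_span ⟨i, Set.mem_Iic.mpr (by omega), rfl⟩))
      (Ideal.mul_mem_left _ _
        (Ideal.mem_sup_right (Ideal.subset_span ⟨d - j, Set.mem_Iic.mpr le_rfl, rfl⟩)))
  -- homogeneous component facts
  have hhcI : ∀ p ∈ I, (homogeneousComponent d) p ∈ Submodule.span ℂ (F '' Set.Iic (d - j)) := by
    intro p hp
    rw [hI] at hp
    refine Stmt12.hc_sup (by omega) ?_ hp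
    rintro g ⟨i, hi, rfl⟩
    exact Stmt12.ff_mem d j hj c (by have := Set.mem_Iic.mp hi; omega)
  have hhcI' : ∀ b p, p ∈ I' b →
      (homogeneousComponent d) p ∈ Submodule.span ℂ (Stmt12.gg d j a b '' Set.Iic (d - j - 1)) := by
    intro b p hp
    rw [hI'eq b] at hp
    refine Stmt12.hc_sup (by omega) ?_ hp
    rintro g ⟨i, hi, rfl⟩
    exact Stmt12.gg_mem d j hjd' a b (by have := Set.mem_Iic.mp hi; omega)
  refine ⟨part1, ?_, ?_⟩
  ·
    -- Part 2: finrank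
    have hFdj : F (d - j) ∈ I := hffI (d - j) le_rfl
    have hFdjhom : F (d - j) ∈ homogeneousSubmodule (Fin 2) ℂ d :=
      Stmt12.ff_mem d j hj c (by omega)
    rw [finrank_eq_one_iff']
    refine ⟨Submodule.Quotient.mk (⟨F (d - j), hFdj⟩ : I), ?_, ?_⟩
    · -- nonzero
      intro hv0
      rw [Submodule.Quotient.mk_eq_zero, Submodule.mem_comap] at hv0
      have hmem : F (d - j) ∈ I' b₀ := hv0
      have hsp := hhcI' b₀ _ hmem
      have hhcf : (homogeneousComponent d) (F (d - j)) = F (d - j) := by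
        rw [homogeneousComponent_of_mem hFdjhom, if_pos rfl]
      rw [hhcf, ← hG] at hsp
      obtain ⟨lam, hrepr⟩ := Stmt12.span_repr _ _ hsp
      have hlam0 : ∀ k ≤ d - j - 1, lam k = 0 := by
        intro k hk
        have hk' : k ≤ d - j := by omega
        have h1 := congrArg (coeff (ev d k)) hrepr
        rw [Stmt12.coeff_ff_low d j c (d - j) hk', if_neg (by omega),
          Stmt12.coeff_sum_smul] at h1
        have hco : ∀ m, coeff (ev d k) (G m) = if k = m then 1 else 0 := by
          intro m
          rw [hG, Stmt12.coeff_gg_low d j a b₀ m hk',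
            if_neg (show ¬k = d - j by omega), mul_zero, add_zero]
        simp only [hco] at h1
        rw [Stmt12.sum_delta _ _ (Finset.mem_Iic.mpr hk)] at h1
        exact h1.symm
      have hzero : F (d - j) = 0 := by
        rw [hrepr]
        exact Finset.sum_eq_zero fun m hm => by
          rw [hlam0 m (Finset.mem_Iic.mp hm), zero_smul]
      have h1 := congrArg (coeff (ev d (d - j))) hzero
      rw [Stmt12.coeff_ff_low d j c (d - j) le_rfl, if_pos rfl, coeff_zero] at h1
      exact one_ne_zero h1
    · -- spanning
      intro w
      obtain ⟨⟨p, hp⟩, rfl⟩ := Submodule.Quotient.mk_surjective _ w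
      obtain ⟨q, hq, r, hr, hqr⟩ := Submodule.mem_sup.mp (hI ▸ hp)
      obtain ⟨rr, hrrepr⟩ := Stmt12.span_repr (d - j) F hr
      rw [Stmt12.sum_Iic_top (d - j) hdj1] at hrrepr
      set z : ℂ := constantCoeff (rr (d - j) - ∑ m ∈ Finset.Iic (d - j - 1), rr m * C (a m))
        with hz
      have key : p - C z * F (d - j)
          = q + (∑ m ∈ Finset.Iic (d - j - 1), rr m • G m)
            + ((rr (d - j) - ∑ m ∈ Finset.Iic (d - j - 1), rr m * C (a m)) - C z) * F (d - j) := by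
        simp only [hGm, smul_eq_mul, mul_add, ← mul_assoc] at hrrepr ⊢
        rw [Finset.sum_add_distrib, ← Finset.sum_mul, ← hqr, hrrepr]
        ring
      have hmem : p - C z * F (d - j) ∈ I' b₀ := by
        rw [key, hI'eq b₀]
        refine Ideal.add_mem _ (Ideal.add_mem _ (Ideal.mem_sup_left hq) ?_) ?_
        · refine Ideal.mem_sup_right (Ideal.sum_mem _ fun m hm => ?_)
          rw [smul_eq_mul]
          exact Ideal.mul_mem_left _ _
            (Ideal.subset_span ⟨m, Set.mem_Iic.mpr (Finset.mem_Iic.mp hm), rfl⟩)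
        · apply Ideal.mem_sup_left
          rw [pow_succ']
          refine Ideal.mul_mem_mul ?_ (Stmt12.homog_mem_pow hFdjhom)
          apply Stmt12.mem_span_X_of_constantCoeff
          rw [map_sub, constantCoeff_C, hz, sub_self]
      refine ⟨z, ?_⟩
      rw [← Submodule.Quotient.mk_smul, (Submodule.Quotient.eq _)]
      rw [Submodule.mem_comap]
      have hcoe : ((z • (⟨F (d - j), hFdj⟩ : I) - ⟨p, hp⟩ : I) : R2)
          = -(p - C z * F (d - j)) := by
        simp only [AddSubgroupClass.coe_sub, Submodule.coe_smul_of_tower]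
        rw [smul_eq_C_mul]
        ring
      show ((z • (⟨F (d - j), hFdj⟩ : I) - ⟨p, hp⟩ : I) : R2) ∈ I' b₀
      rw [hcoe]
      exact neg_mem hmem

  · -- Part 3: uniqueness
    intro b hb i hi i' hi'
    have hi'' := Finset.mem_Icc.mp hi'
    have hgI : Stmt12.gg d j a b i ∈ I := by
      apply hb
      rw [hI'eq b]
      exact Ideal.mem_sup_right (Ideal.subset_span ⟨i, Set.mem_Iic.mpr hi, rfl⟩)
    have hhcg : (homogeneousComponent d) (Stmt12.gg d j a b i) = Stmt12.gg d j a b i := by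
      rw [homogeneousComponent_of_mem (Stmt12.gg_mem d j hjd' a b (by omega)), if_pos rfl]
    have hsp := hhcI _ hgI
    rw [hhcg] at hsp
    obtain ⟨lam, hrepr⟩ := Stmt12.span_repr _ _ hsp
    have hlam : ∀ k ≤ d - j,
        lam k = (if k = i then 1 else 0) + a i * (if k = d - j then 1 else 0) := by
      intro k hk
      have h1 := congrArg (coeff (ev d k)) hrepr
      rw [Stmt12.coeff_gg_low d j a b i hk, Stmt12.coeff_sum_smul] at h1
      have hco : ∀ m, coeff (ev d k) (F m) = if k = m then 1 else 0 := fun m =>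
        Stmt12.coeff_ff_low d j c m hk
      simp only [hco] at h1
      rw [Stmt12.sum_delta _ _ (Finset.mem_Iic.mpr hk)] at h1
      exact h1.symm
    have h2 := congrArg (coeff (ev d i')) hrepr
    rw [Stmt12.coeff_gg_high d j a b (by omega) hi', Stmt12.coeff_sum_smul] at h2
    have hsc : ∑ m ∈ Finset.Iic (d - j), lam m * coeff (ev d i') (F m)
        = ∑ m ∈ Finset.Iic (d - j),
            ((if m = i then 1 else 0) + a i * (if m = d - j then 1 else 0)) * c m i' := by
      refine Finset.sum_congr rfl fun m hm => ?_
      rw [Stmt12.coeff_ff_high d j c (Finset.mem_Iic.mp hm) hi',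
        hlam m (Finset.mem_Iic.mp hm)]
    rw [hsc] at h2
    have h3 : ∑ m ∈ Finset.Iic (d - j),
        ((if m = i then (1:ℂ) else 0) + a i * (if m = d - j then 1 else 0)) * c m i'
          = c i i' + a i * c (d - j) i' :=
      Stmt12.sum_two_delta (d - j) i (d - j) (Finset.mem_Iic.mpr (by omega))
        (Finset.mem_Iic.mpr le_rfl) (by omega) (a i) (fun m => c m i')
    rw [h3] at h2
    exact h2
end

section
/- Let R = ℂ[x,y] and m = (x,y). There exists an injective map from ℂ^46 to the set of chains of ideals of R, sending a parameter tuple (a_1,…,a_46) to a chain I_1 ⊇ I_2 ⊇ ⋯ ⊇ I_23 of ideals of R with the following properties for every parameter value: (i) m^7 ⊆ I_i ⊆ m for every 1 ≤ i ≤ 23 (so every I_i defines a subscheme of 𝔸² supported only at the origin); (ii) dim_ℂ(ℂ[x,y]/I_i) = i for every 1 ≤ i ≤ 23. -/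
open MvPolynomial

noncomputable section
namespace S13

abbrev R2 : Type := MvPolynomial (Fin 2) ℂ
abbrev D2 : Type := Fin 2 →₀ ℕ

def dg (μ : D2) : ℕ := μ 0 + μ 1

def E (p q : ℕ) : D2 := Finsupp.single 0 p + Finsupp.single 1 q

@[simp] lemma E_apply0 (p q : ℕ) : E p q 0 = p := by simp [E]
@[simp] lemma E_apply1 (p q : ℕ) : E p q 1 = q := by simp [E]

lemma E_eta (μ : D2) : E (μ 0) (μ 1) = μ := by
  ext i
  fin_cases i <;> simp [E]

lemma E_inj {p q p' q' : ℕ} (h : E p q = E p' q') : p = p' ∧ q = q' := by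
  constructor
  · have := congrArg (fun μ : D2 => μ 0) h; simpa using this
  · have := congrArg (fun μ : D2 => μ 1) h; simpa using this

@[simp] lemma dg_E (p q : ℕ) : dg (E p q) = p + q := by simp [dg]

/-- the `ℂ`-submodule of polynomials with support inside `s`. -/
def W (s : Set D2) : Submodule ℂ R2 where
  carrier := {f | ∀ μ, coeff μ f ≠ 0 → μ ∈ s}
  add_mem' := by
    intro f g hf hg μ hμ
    rw [coeff_add] at hμ
    by_cases h : coeff μ f ≠ 0
    · exact hf μ h
    · push_neg at h
      exact hg μ (by simpa [h] using hμ)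
  zero_mem' := by intro μ hμ; simp at hμ
  smul_mem' := by
    intro c f hf μ hμ
    rw [coeff_smul] at hμ
    exact hf μ (by intro h; simp [h] at hμ)

lemma mem_W {s : Set D2} {f : R2} : f ∈ W s ↔ ∀ μ, coeff μ f ≠ 0 → μ ∈ s := Iff.rfl

lemma W_mono {s t : Set D2} (h : s ⊆ t) : W s ≤ W t := fun f hf μ hμ => h (hf μ hμ)

lemma monomial_mem_W {s : Set D2} {μ : D2} (h : μ ∈ s) (c : ℂ) : (monomial μ c : R2) ∈ W s := by
  intro ν hν
  rw [coeff_monomial] at hν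
  rcases eq_or_ne μ ν with rfl | hne
  · exact h
  · simp [hne] at hν

lemma eq_zero_of_mem_W_empty {f : R2} (h : f ∈ W ∅) : f = 0 := by
  ext μ
  by_contra hμ
  exact (h μ (by simpa using hμ))

lemma W_eq_span (s : Set D2) :
    W s = Submodule.span ℂ ((fun μ => (monomial μ 1 : R2)) '' s) := by
  apply le_antisymm
  · intro f hf
    rw [f.as_sum]
    refine Submodule.sum_mem _ (fun μ hμ => ?_)
    have h1 : (monomial μ (coeff μ f) : R2) = coeff μ f • monomial μ 1 := by
      simp [smul_monomial]
    rw [h1]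
    refine Submodule.smul_mem _ _ (Submodule.subset_span ?_)
    exact ⟨μ, hf μ (by simpa using hμ), rfl⟩
  · rw [Submodule.span_le]
    rintro _ ⟨μ, hμ, rfl⟩
    exact monomial_mem_W hμ 1

lemma W_union (s t : Set D2) : W (s ∪ t) = W s ⊔ W t := by
  rw [W_eq_span, W_eq_span, W_eq_span, Set.image_union, Submodule.span_union]


-- degree sets
def sHigh (n : ℕ) : Set D2 := {μ | n ≤ dg μ}
def sEq (n : ℕ) : Set D2 := {μ | dg μ = n}

-- parameters
def enc (k d j : ℕ) : ℕ :=
  (if k ≤ 5 then ![0, 0, 1, 4, 10, 20, 0] ⟨k % 7, Nat.mod_lt _ (by norm_num)⟩ + d * (d - 1) / 2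
   else if d = 6 then 35 else 41) + j

def encF (k d j : ℕ) : Fin 46 := ⟨enc k d j % 46, Nat.mod_lt _ (by norm_num)⟩

def Pa (a : Fin 46 → ℂ) (k d j : ℕ) : ℂ := a (encF k d j)

/-- `u a k t j` is the `j`-th basis vector of the flag subspace `V_{k+1-t}` of
degree-`k` forms.  -/
def u (a : Fin 46 → ℂ) (k : ℕ) : ℕ → ℕ → R2
  | 0, j => monomial (E (k - j) j) 1
  | t + 1, j => u a k t j + Pa a k (k - t) j • u a k t (k - t)

def v (a : Fin 46 → ℂ) (k d j : ℕ) : R2 := u a k (k + 1 - d) j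

lemma u_mem_W {a : Fin 46 → ℂ} {k : ℕ} : ∀ t j, j ≤ k → u a k t j ∈ W (sEq k)
  | 0, j, hj => by
      intro μ hμ
      rw [u, coeff_monomial] at hμ
      rcases eq_or_ne (E (k - j) j) μ with rfl | hne
      · simp [sEq, dg_E, Nat.sub_add_cancel hj]
      · simp [hne] at hμ
  | t + 1, j, hj => by
      rw [u]
      exact (W (sEq k)).add_mem (u_mem_W t j hj)
        ((W (sEq k)).smul_mem _ (u_mem_W t (k - t) (Nat.sub_le _ _)))

lemma coeff_u {a : Fin 46 → ℂ} {k : ℕ} :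
    ∀ t j j', j < k + 1 - t → j' < k + 1 - t →
      coeff (E (k - j') j') (u a k t j) = if j = j' then 1 else 0
  | 0, j, j', hj, hj' => by
      rw [u, coeff_monomial]
      have hjk : j ≤ k := by omega
      have hj'k : j' ≤ k := by omega
      by_cases h : j = j'
      · subst h; simp
      · have : E (k - j) j ≠ E (k - j') j' := by
          intro he
          exact h (by simpa using congrArg (fun μ : D2 => μ 1) he)
        simp [this, h]
  | t + 1, j, j', hj, hj' => by
      have h1 : j < k + 1 - t := by omega
      have h2 : j' < k + 1 - t := by omega
      have h3 : k - t < k + 1 - t := by omega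
      rw [u, coeff_add, coeff_smul, coeff_u t j j' h1 h2, coeff_u t (k - t) j' h3 h2]
      have : j' ≠ k - t := by omega
      simp [this.symm]


-- ## Part 3 : ideals

def MonsDeg (n : ℕ) : Set R2 := (fun μ => (monomial μ 1 : R2)) '' (sEq n)

def Idl (a : Fin 46 → ℂ) (k d : ℕ) : Ideal R2 :=
  Ideal.span (MonsDeg (k + 1) ∪ Set.range fun j : Fin d => v a k d j)

lemma X_eq_monomial (i : Fin 2) : (X i : R2) = monomial (Finsupp.single i 1) 1 := by
  rw [← X_pow_eq_monomial, pow_one]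

lemma monomial_mem_span_monsDeg {n : ℕ} {μ : D2} (h : n ≤ dg μ) (c : ℂ) :
    (monomial μ c : R2) ∈ Ideal.span (MonsDeg n) := by
  set ν : D2 := E (min (μ 0) n) (n - min (μ 0) n) with hν
  have hν0 : ν 0 = min (μ 0) n := by simp [hν]
  have hν1 : ν 1 = n - min (μ 0) n := by simp [hν]
  have hdgν : dg ν = n := by
    simp only [hν, dg_E]; omega
  have hdg : n ≤ μ 0 + μ 1 := h
  have hle : ν ≤ μ := by
    rw [Finsupp.le_def]
    intro i
    fin_cases i
    · show ν 0 ≤ μ 0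
      rw [hν0]; omega
    · show ν 1 ≤ μ 1
      rw [hν1]; omega
  have hsub : μ - ν + ν = μ := tsub_add_cancel_of_le hle
  have : (monomial μ c : R2) = monomial (μ - ν) c * monomial ν 1 := by
    rw [monomial_mul, mul_one, hsub]
  rw [this]
  exact Ideal.mul_mem_left _ _ (Ideal.subset_span ⟨ν, hdgν, rfl⟩)

lemma W_high_le_span_monsDeg (n : ℕ) :
    W (sHigh n) ≤ (Ideal.span (MonsDeg n)).restrictScalars ℂ := by
  intro f hf
  rw [Submodule.restrictScalars_mem, f.as_sum]
  refine Submodule.sum_mem _ fun μ hμ => ?_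
  exact monomial_mem_span_monsDeg (hf μ (by simpa using hμ)) _

lemma monsDeg_one : MonsDeg 1 = {(X 0 : R2), X 1} := by
  ext f
  constructor
  · rintro ⟨μ, hμ, rfl⟩
    have h1 : μ 0 + μ 1 = 1 := hμ
    show (monomial μ 1 : R2) ∈ _
    rcases Nat.eq_zero_or_pos (μ 0) with h0 | h0
    · have hμ1 : μ = Finsupp.single 1 1 := by
        ext i; fin_cases i <;> simp <;> omega
      right; rw [hμ1, ← X_eq_monomial]; rfl
    · have hμ0 : μ = Finsupp.single 0 1 := by
        ext i; fin_cases i <;> simp <;> omega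
      left; rw [hμ0, ← X_eq_monomial]
  · rintro (rfl | rfl)
    · exact ⟨Finsupp.single 0 1, by simp [sEq, dg], (X_eq_monomial 0).symm⟩
    · exact ⟨Finsupp.single 1 1, by simp [sEq, dg], (X_eq_monomial 1).symm⟩

lemma m_pow_le_span_monsDeg : ∀ n : ℕ, 1 ≤ n →
    (Ideal.span {(X 0 : R2), X 1}) ^ n ≤ Ideal.span (MonsDeg n)
  | 1, _ => by rw [pow_one, ← monsDeg_one]
  | n + 2, _ => by
      have IH := m_pow_le_span_monsDeg (n + 1) (by omega)
      calc (Ideal.span {(X 0 : R2), X 1}) ^ (n + 2)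
          = (Ideal.span {(X 0 : R2), X 1}) ^ (n + 1) * Ideal.span {(X 0 : R2), X 1} := by
            rw [pow_succ]
        _ ≤ Ideal.span (MonsDeg (n + 1)) * Ideal.span {(X 0 : R2), X 1} :=
            Ideal.mul_mono_left IH
        _ ≤ Ideal.span (MonsDeg (n + 2)) := by
            rw [Ideal.span_mul_span']
            rw [Ideal.span_le]
            rintro _ ⟨_, ⟨μ, hμ, rfl⟩, x, hx, rfl⟩
            rcases hx with rfl | rfl
            · refine Ideal.subset_span ⟨μ + Finsupp.single 0 1, ?_, ?_⟩
              · have : dg μ = n + 1 := hμ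
                simp only [sEq, Set.mem_setOf_eq, dg] at this ⊢
                simp [Finsupp.add_apply]; omega
              · show (monomial (μ + Finsupp.single 0 1) 1 : R2) = monomial μ 1 * X 0
                rw [X_eq_monomial, monomial_mul, mul_one]
            · refine Ideal.subset_span ⟨μ + Finsupp.single 1 1, ?_, ?_⟩
              · have : dg μ = n + 1 := hμ
                simp only [sEq, Set.mem_setOf_eq, dg] at this ⊢
                simp [Finsupp.add_apply]; omega
              · show (monomial (μ + Finsupp.single 1 1) 1 : R2) = monomial μ 1 * X 1
                rw [X_eq_monomial, monomial_mul, mul_one]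


-- ## Part 4 : stability and the module description of the ideals

lemma X_mul_mem_W_high {n : ℕ} {f : R2} (i : Fin 2) (hf : f ∈ W (sHigh n)) :
    X i * f ∈ W (sHigh (n + 1)) := by
  intro μ hμ
  rw [X_eq_monomial, coeff_monomial_mul'] at hμ
  by_cases hle : Finsupp.single i 1 ≤ μ
  · rw [if_pos hle, one_mul] at hμ
    have h2 := hf _ hμ
    have hi : 1 ≤ μ i := by
      have := hle i; simpa using this
    have hdg : n ≤ dg (μ - Finsupp.single i 1) := h2
    simp only [dg, Finsupp.tsub_apply] at hdg
    show n + 1 ≤ μ 0 + μ 1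
    fin_cases i <;> simp_all <;> omega
  · rw [if_neg hle] at hμ; exact absurd rfl hμ

lemma X_mul_mem_W_eq {n : ℕ} {f : R2} (i : Fin 2) (hf : f ∈ W (sEq n)) :
    X i * f ∈ W (sHigh (n + 1)) := by
  have : f ∈ W (sHigh n) := by
    intro μ hμ; exact le_of_eq (hf μ hμ).symm
  exact X_mul_mem_W_high i this

lemma sHigh_antitone {n m : ℕ} (h : n ≤ m) : sHigh m ⊆ sHigh n :=
  fun μ hμ => le_trans h hμ

/-- the candidate module `P`. -/
def Pmod (a : Fin 46 → ℂ) (k d : ℕ) : Submodule ℂ R2 :=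
  W (sHigh (k + 1)) ⊔ Submodule.span ℂ (Set.range fun j : Fin d => v a k d j)

lemma v_mem_W_eq {a : Fin 46 → ℂ} {k d : ℕ} (hd : d ≤ k + 1) (j : Fin d) :
    v a k d j ∈ W (sEq k) :=
  u_mem_W _ _ (by omega)

lemma X_mul_mem_Pmod {a : Fin 46 → ℂ} {k d : ℕ} (hd : d ≤ k + 1) (i : Fin 2) {x : R2}
    (hx : x ∈ Pmod a k d) : X i * x ∈ Pmod a k d := by
  rcases Submodule.mem_sup.mp hx with ⟨w, hw, y, hy, rfl⟩
  rw [mul_add]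
  refine Submodule.add_mem _ ?_ ?_
  · exact le_sup_left (α := Submodule ℂ R2)
      (W_mono (sHigh_antitone (by omega)) (X_mul_mem_W_high i hw))
  · refine Submodule.span_induction ?_ ?_ ?_ ?_ hy
    · rintro _ ⟨j, rfl⟩
      exact le_sup_left (α := Submodule ℂ R2) (X_mul_mem_W_eq i (v_mem_W_eq hd j))
    · simp [Pmod]
    · intro y z _ _ hy hz
      rw [mul_add]; exact Submodule.add_mem _ hy hz
    · intro c y _ hy
      rw [mul_smul_comm]; exact Submodule.smul_mem _ _ hy

lemma mul_mem_Pmod {a : Fin 46 → ℂ} {k d : ℕ} (hd : d ≤ k + 1) (r : R2) {x : R2}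
    (hx : x ∈ Pmod a k d) : r * x ∈ Pmod a k d := by
  induction r using MvPolynomial.induction_on with
  | C c => rw [C_mul']; exact Submodule.smul_mem _ _ hx
  | add p q hp hq => rw [add_mul]; exact Submodule.add_mem _ hp hq
  | mul_X p n hp =>
      have : p * X n * x = X n * (p * x) := by ring
      rw [this]
      exact X_mul_mem_Pmod hd n hp

lemma Idl_eq_Pmod (a : Fin 46 → ℂ) (k d : ℕ) (hd : d ≤ k + 1) :
    (Idl a k d).restrictScalars ℂ = Pmod a k d := by
  apply le_antisymm
  · intro x hx
    rw [Submodule.restrictScalars_mem] at hx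
    refine Submodule.span_induction ?_ ?_ ?_ ?_ hx
    · rintro g (⟨μ, hμ, rfl⟩ | ⟨j, rfl⟩)
      · refine le_sup_left (α := Submodule ℂ R2) (monomial_mem_W ?_ 1)
        exact le_of_eq (hμ).symm
      · exact le_sup_right (α := Submodule ℂ R2)
          (Submodule.subset_span ⟨j, rfl⟩)
    · simp [Pmod]
    · intro y z _ _ hy hz; exact Submodule.add_mem _ hy hz
    · intro r y _ hy
      rw [smul_eq_mul]
      exact mul_mem_Pmod hd r hy
  · rw [Pmod]
    apply sup_le
    · refine le_trans (W_high_le_span_monsDeg (k + 1)) ?_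
      intro x hx
      exact Ideal.span_mono Set.subset_union_left hx
    · rw [Submodule.span_le]
      rintro _ ⟨j, rfl⟩
      exact Ideal.subset_span (Or.inr ⟨j, rfl⟩)


-- ## Part 5 : counting

def Tri (k : ℕ) : Finset D2 :=
  (Finset.range (k + 1)).biUnion fun t => (Finset.range (t + 1)).image fun j => E (t - j) j

lemma mem_Tri {k : ℕ} {μ : D2} : μ ∈ Tri k ↔ dg μ ≤ k := by
  constructor
  · intro h
    rcases Finset.mem_biUnion.mp h with ⟨t, ht, h2⟩
    rcases Finset.mem_image.mp h2 with ⟨j, hj, rfl⟩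
    rw [Finset.mem_range] at ht hj
    rw [dg_E]; omega
  · intro h
    have hμ : μ 0 + μ 1 ≤ k := h
    refine Finset.mem_biUnion.mpr ⟨dg μ, Finset.mem_range.mpr (by omega), ?_⟩
    refine Finset.mem_image.mpr ⟨μ 1, Finset.mem_range.mpr (by unfold dg; omega), ?_⟩
    have h2 : dg μ - μ 1 = μ 0 := by simp [dg]
    rw [h2, E_eta]

lemma card_Tri (k : ℕ) : (Tri k).card = (k + 1) * (k + 2) / 2 := by
  have h2 : 2 * ∑ t ∈ Finset.range (k + 1), (t + 1) = (k + 1) * (k + 2) := by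
    induction k with
    | zero => rfl
    | succ n ih =>
        rw [Finset.sum_range_succ, Nat.mul_add, ih]
        ring
  have hcard : (Tri k).card = ∑ t ∈ Finset.range (k + 1), (t + 1) := by
    rw [Tri, Finset.card_biUnion]
    · refine Finset.sum_congr rfl fun t _ => ?_
      rw [Finset.card_image_of_injOn, Finset.card_range]
      intro j _ j' _ he
      have := congrArg (fun μ : D2 => μ 1) he
      simpa using this
    · intro t _ t' _ hne
      rw [Function.onFun, Finset.disjoint_left]
      rintro μ h1 h2
      rcases Finset.mem_image.mp h1 with ⟨j, hj, rfl⟩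
      rcases Finset.mem_image.mp h2 with ⟨j', hj', he⟩
      rw [Finset.mem_range] at hj hj'
      have := congrArg dg he
      rw [dg_E, dg_E] at this
      omega
  rw [hcard]
  exact (Nat.div_eq_of_eq_mul_left two_pos (by rw [← h2]; ring)).symm


def Piv (k d : ℕ) : Finset D2 := (Finset.range d).image fun j => E (k - j) j

lemma mem_Piv {k d : ℕ} {μ : D2} : μ ∈ Piv k d ↔ ∃ j < d, μ = E (k - j) j := by
  simp [Piv, eq_comm]

lemma card_Piv (k d : ℕ) : (Piv k d).card = d := by
  rw [Piv, Finset.card_image_of_injOn, Finset.card_range]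
  intro j _ j' _ he
  have := congrArg (fun μ : D2 => μ 1) he
  simpa using this

lemma Piv_subset_Tri {k d : ℕ} (hd : d ≤ k + 1) : Piv k d ⊆ Tri k := by
  intro μ hμ
  rcases mem_Piv.mp hμ with ⟨j, hj, rfl⟩
  rw [mem_Tri, dg_E]
  omega

def Sc (k d : ℕ) : Finset D2 := Tri k \ Piv k d

lemma card_Sc {k d : ℕ} (hd : d ≤ k + 1) : (Sc k d).card = (k + 1) * (k + 2) / 2 - d := by
  rw [Sc, Finset.card_sdiff_of_subset (Piv_subset_Tri hd), card_Tri, card_Piv]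

lemma sK_spec {k d : ℕ} (hd : d ≤ k + 1) (μ : D2) :
    μ ∉ Sc k d ↔ μ ∈ sHigh (k + 1) ∪ ↑(Piv k d) := by
  rw [Sc, Finset.mem_sdiff]
  push_neg
  constructor
  · intro h
    by_cases hμ : μ ∈ Tri k
    · exact Or.inr (h hμ)
    · left
      rw [mem_Tri] at hμ
      exact by simpa [sHigh] using Nat.succ_le_of_lt (Nat.lt_of_not_le hμ)
  · rintro (h | h) hT
    · rw [mem_Tri] at hT
      have : k + 1 ≤ dg μ := h
      omega
    · exact h

-- ## Part 6 : the unipotent automorphism and the quotient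

variable (a : Fin 46 → ℂ)

def Nmap (a : Fin 46 → ℂ) (k d : ℕ) : R2 →ₗ[ℂ] R2 :=
  ∑ j ∈ Finset.range d,
    (LinearMap.toSpanSingleton ℂ R2 (v a k d j - monomial (E (k - j) j) 1)).comp
      (lcoeff ℂ (E (k - j) j))

lemma Nmap_apply (k d : ℕ) (f : R2) :
    Nmap a k d f =
      ∑ j ∈ Finset.range d,
        coeff (E (k - j) j) f • (v a k d j - monomial (E (k - j) j) 1) := by
  simp [Nmap, LinearMap.sum_apply, LinearMap.toSpanSingleton, lcoeff]

lemma coeff_pivot_v {k d j j' : ℕ} (hd : d ≤ k + 1) (hj : j < d) (hj' : j' < d) :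
    coeff (E (k - j') j') (v a k d j) = if j = j' then 1 else 0 := by
  rw [v]
  exact coeff_u (k + 1 - d) j j' (by omega) (by omega)

lemma coeff_pivot_sub {k d j j' : ℕ} (hd : d ≤ k + 1) (hj : j < d) (hj' : j' < d) :
    coeff (E (k - j') j') (v a k d j - monomial (E (k - j) j) 1) = 0 := by
  rw [coeff_sub, coeff_pivot_v a hd hj hj', coeff_monomial]
  have hjk : j ≤ k := by omega
  have hj'k : j' ≤ k := by omega
  by_cases h : j = j'
  · subst h; simp
  · have hne : E (k - j) j ≠ E (k - j') j' := fun he =>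
      h (by simpa using congrArg (fun μ : D2 => μ 1) he)
    simp [h, hne]

lemma Nmap_Nmap {k d : ℕ} (hd : d ≤ k + 1) (f : R2) :
    Nmap a k d (Nmap a k d f) = 0 := by
  rw [Nmap_apply a k d f, map_sum]
  refine Finset.sum_eq_zero fun j hj => ?_
  rw [Finset.mem_range] at hj
  rw [map_smul, Nmap_apply]
  have : ∀ j' ∈ Finset.range d,
      coeff (E (k - j') j') (v a k d j - monomial (E (k - j) j) 1) •
        (v a k d j' - monomial (E (k - j') j') 1) = 0 := by
    intro j' hj'
    rw [Finset.mem_range] at hj'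
    rw [coeff_pivot_sub a hd hj hj', zero_smul]
  rw [Finset.sum_congr rfl this, Finset.sum_const_zero, smul_zero]

lemma Nmap_high {k d : ℕ} (hd : d ≤ k + 1) {f : R2} (hf : f ∈ W (sHigh (k + 1))) :
    Nmap a k d f = 0 := by
  rw [Nmap_apply]
  refine Finset.sum_eq_zero fun j hj => ?_
  rw [Finset.mem_range] at hj
  have hc : coeff (E (k - j) j) f = 0 := by
    by_contra hne
    have := hf _ hne
    have h2 : k + 1 ≤ dg (E (k - j) j) := this
    rw [dg_E] at h2
    omega
  rw [hc, zero_smul]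

lemma Nmap_pivot_monomial {k d j : ℕ} (hd : d ≤ k + 1) (hj : j < d) :
    Nmap a k d (monomial (E (k - j) j) 1) = v a k d j - monomial (E (k - j) j) 1 := by
  rw [Nmap_apply]
  rw [Finset.sum_eq_single j]
  · rw [coeff_monomial, if_pos rfl, one_smul]
  · intro j' hj' hne
    rw [Finset.mem_range] at hj'
    have : E (k - j) j ≠ E (k - j') j' := fun he =>
      hne.symm (by simpa using congrArg (fun μ : D2 => μ 1) he)
    rw [coeff_monomial, if_neg this, zero_smul]
  · intro h
    exact absurd (Finset.mem_range.mpr hj) h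

lemma Nmap_v {k d j : ℕ} (hd : d ≤ k + 1) (hj : j < d) :
    Nmap a k d (v a k d j) = v a k d j - monomial (E (k - j) j) 1 := by
  rw [Nmap_apply]
  rw [Finset.sum_eq_single j]
  · rw [coeff_pivot_v a hd hj hj, if_pos rfl, one_smul]
  · intro j' hj' hne
    rw [Finset.mem_range] at hj'
    rw [coeff_pivot_v a hd hj hj', if_neg (by omega), zero_smul]
  · intro h
    exact absurd (Finset.mem_range.mpr hj) h

def phiMap (k d : ℕ) : R2 →ₗ[ℂ] (↑(Sc k d) → ℂ) :=
  LinearMap.pi fun μ => lcoeff ℂ (μ : D2)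

def psiMap (a : Fin 46 → ℂ) (k d : ℕ) : R2 →ₗ[ℂ] (↑(Sc k d) → ℂ) :=
  (phiMap k d).comp ((LinearMap.id : R2 →ₗ[ℂ] R2) - Nmap a k d)

lemma phiMap_surjective (k d : ℕ) : Function.Surjective (phiMap k d) := by
  intro g
  refine ⟨∑ μ ∈ (Sc k d).attach, g μ • monomial (μ : D2) 1, ?_⟩
  funext ν
  show coeff (ν : D2) (∑ μ ∈ (Sc k d).attach, g μ • monomial (μ : D2) 1) = g ν
  rw [coeff_sum]
  rw [Finset.sum_eq_single ν]
  · rw [coeff_smul, coeff_monomial, if_pos rfl, smul_eq_mul, mul_one]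
  · intro μ _ hne
    rw [coeff_smul, coeff_monomial, if_neg (fun he => hne (Subtype.ext he)), smul_eq_mul,
      mul_zero]
  · intro h
    exact absurd (Finset.mem_attach _ _) h

lemma psiMap_surjective (k d : ℕ) (hd : d ≤ k + 1) :
    Function.Surjective (psiMap a k d) := by
  intro g
  rcases phiMap_surjective k d g with ⟨f, rfl⟩
  refine ⟨f + Nmap a k d f, ?_⟩
  show phiMap k d (((LinearMap.id : R2 →ₗ[ℂ] R2) - Nmap a k d) (f + Nmap a k d f)) = _
  have : ((LinearMap.id : R2 →ₗ[ℂ] R2) - Nmap a k d) (f + Nmap a k d f) = f := by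
    simp only [LinearMap.sub_apply, LinearMap.id_apply, map_add]
    rw [Nmap_Nmap a hd]
    abel
  rw [this]

lemma ker_phiMap (k d : ℕ) (hd : d ≤ k + 1) :
    LinearMap.ker (phiMap k d) = W (sHigh (k + 1) ∪ ↑(Piv k d)) := by
  ext f
  rw [LinearMap.mem_ker, mem_W]
  constructor
  · intro h μ hμ
    rw [← sK_spec hd]
    intro hSc
    have := congrFun h ⟨μ, hSc⟩
    exact hμ this
  · intro h
    funext ν
    show coeff (ν : D2) f = 0
    by_contra hne
    have := h _ hne
    rw [← sK_spec hd] at this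
    exact this ν.2

lemma ker_psiMap (k d : ℕ) (hd : d ≤ k + 1) :
    LinearMap.ker (psiMap a k d) = Pmod a k d := by
  ext x
  rw [LinearMap.mem_ker]
  show phiMap k d (((LinearMap.id : R2 →ₗ[ℂ] R2) - Nmap a k d) x) = 0 ↔ _
  rw [← LinearMap.mem_ker, ker_phiMap k d hd, W_union]
  constructor
  · intro h
    have hx : x = ((LinearMap.id : R2 →ₗ[ℂ] R2) - Nmap a k d) x + Nmap a k d (((LinearMap.id : R2 →ₗ[ℂ] R2) - Nmap a k d) x)
        + Nmap a k d (Nmap a k d x) := by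
      simp only [LinearMap.sub_apply, LinearMap.id_apply, map_sub]
      abel
    rw [hx, Nmap_Nmap a hd, add_zero]
    set y := ((LinearMap.id : R2 →ₗ[ℂ] R2) - Nmap a k d) x with hy
    clear_value y
    clear hy hx
    -- show y + N y ∈ Pmod for y ∈ W high ⊔ W piv
    rcases Submodule.mem_sup.mp h with ⟨w, hw, p, hp, rfl⟩
    rw [map_add]
    have h1 : w + Nmap a k d w ∈ Pmod a k d := by
      rw [Nmap_high a hd hw, add_zero]
      exact le_sup_left (α := Submodule ℂ R2) hw
    have h2 : p + Nmap a k d p ∈ Pmod a k d := by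
      rw [W_eq_span] at hp
      refine Submodule.span_induction ?_ ?_ ?_ ?_ hp
      · rintro _ ⟨μ, hμ, rfl⟩
        rcases mem_Piv.mp hμ with ⟨j, hj, rfl⟩
        rw [Nmap_pivot_monomial a hd hj]
        have : (monomial (E (k - j) j) 1 : R2) +
            (v a k d j - monomial (E (k - j) j) 1) = v a k d j := by abel
        rw [this]
        exact le_sup_right (α := Submodule ℂ R2)
          (Submodule.subset_span ⟨⟨j, hj⟩, rfl⟩)
      · simp [Pmod]
      · intro y z _ _ hy hz
        have : y + z + Nmap a k d (y + z) =
            (y + Nmap a k d y) + (z + Nmap a k d z) := by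
          rw [map_add]; abel
        rw [this]
        exact Submodule.add_mem _ hy hz
      · intro c y _ hy
        have : c • y + Nmap a k d (c • y) = c • (y + Nmap a k d y) := by
          rw [map_smul, smul_add]
        rw [this]
        exact Submodule.smul_mem _ _ hy
    have := Submodule.add_mem _ h1 h2
    have heq : w + Nmap a k d w + (p + Nmap a k d p) = w + p + (Nmap a k d w + Nmap a k d p) := by
      abel
    rwa [heq] at this
  · intro hx
    rcases Submodule.mem_sup.mp hx with ⟨w, hw, p, hp, rfl⟩
    simp only [LinearMap.sub_apply, LinearMap.id_apply, map_add]
    have h1 : w - Nmap a k d w ∈ W (sHigh (k + 1)) ⊔ W ↑(Piv k d) := by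
      rw [Nmap_high a hd hw, sub_zero]
      exact le_sup_left (α := Submodule ℂ R2) hw
    have h2 : p - Nmap a k d p ∈ W (sHigh (k + 1)) ⊔ W ↑(Piv k d) := by
      refine Submodule.span_induction ?_ ?_ ?_ ?_ hp
      · rintro _ ⟨j, rfl⟩
        rw [Nmap_v a hd j.2]
        have : v a k d (j : ℕ) - (v a k d (j : ℕ) - monomial (E (k - (j : ℕ)) (j : ℕ)) 1) =
            monomial (E (k - (j : ℕ)) (j : ℕ)) 1 := by abel
        rw [this]
        refine le_sup_right (α := Submodule ℂ R2) (monomial_mem_W ?_ 1)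
        exact mem_Piv.mpr ⟨j, j.2, rfl⟩
      · simp
      · intro y z _ _ hy hz
        have : y + z - Nmap a k d (y + z) = (y - Nmap a k d y) + (z - Nmap a k d z) := by
          rw [map_add]; abel
        rw [this]
        exact Submodule.add_mem _ hy hz
      · intro c y _ hy
        have : c • y - Nmap a k d (c • y) = c • (y - Nmap a k d y) := by
          rw [map_smul, smul_sub]
        rw [this]
        exact Submodule.smul_mem _ _ hy
    have hgoal := Submodule.add_mem _ h1 h2
    have heq : w - Nmap a k d w + (p - Nmap a k d p)
        = w + p - (Nmap a k d w + Nmap a k d p) := by abel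
    first
      | exact hgoal
      | (rw [heq] at hgoal; exact hgoal)
      | (rw [← heq] at hgoal; exact hgoal)

lemma finrank_quotient_Idl (k d : ℕ) (hd : d ≤ k + 1) :
    Module.finrank ℂ (R2 ⧸ Idl a k d) = (k + 1) * (k + 2) / 2 - d := by
  have e1 : (R2 ⧸ (Idl a k d).restrictScalars ℂ) ≃ₗ[ℂ] R2 ⧸ Idl a k d :=
    Submodule.Quotient.restrictScalarsEquiv ℂ (Idl a k d)
  rw [← e1.finrank_eq]
  rw [Idl_eq_Pmod a k d hd, ← ker_psiMap a k d hd]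
  rw [(LinearMap.quotKerEquivOfSurjective _ (psiMap_surjective a k d hd)).finrank_eq]
  rw [Module.finrank_fintype_fun_eq_card, Fintype.card_coe]
  exact card_Sc hd


-- ## Part 7 : the chain

def kOf (i : Fin 23) : ℕ :=
  [0,1,1,2,2,2,3,3,3,3,4,4,4,4,4,5,5,5,5,5,5,6,6].getD i.val 0

def dOf (i : Fin 23) : ℕ :=
  [0,1,0,2,1,0,3,2,1,0,4,3,2,1,0,5,4,3,2,1,0,6,5].getD i.val 0

def Fam (a : Fin 46 → ℂ) (i : Fin 23) : Ideal R2 := Idl a (kOf i) (dOf i)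

lemma v_mem_Idl (a : Fin 46 → ℂ) (k d : ℕ) (hd : d ≤ k + 1) :
    ∀ s j, j < d - s → v a k (d - s) j ∈ Idl a k d := by
  intro s
  induction s with
  | zero =>
      intro j hj
      exact Ideal.subset_span (Or.inr ⟨⟨j, by omega⟩, rfl⟩)
  | succ s ih =>
      intro j hj
      have hds : 1 ≤ d - s := by omega
      have heq : k + 1 - (d - (s + 1)) = (k + 1 - (d - s)) + 1 := by omega
      have hkt : k - (k + 1 - (d - s)) = d - s - 1 := by omega
      rw [v, heq, u]
      refine Ideal.add_mem _ ?_ ?_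
      · have := ih j (by omega)
        rwa [v] at this
      · refine Submodule.smul_of_tower_mem _ _ ?_
        have := ih (d - s - 1) (by omega)
        rw [v] at this
        rw [hkt]
        exact this

lemma Idl_mono_d (a : Fin 46 → ℂ) (k d d' : ℕ) (h : d' ≤ d) (hd : d ≤ k + 1) :
    Idl a k d' ≤ Idl a k d := by
  rw [Idl, Ideal.span_le]
  rintro g (hg | ⟨j, rfl⟩)
  · exact Ideal.subset_span (Or.inl hg)
  · have := v_mem_Idl a k d hd (d - d') j (by omega)
    have hdd : d - (d - d') = d' := by omega
    rwa [hdd] at this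

lemma Idl_step_k (a : Fin 46 → ℂ) (k d' : ℕ) (hd' : d' ≤ k + 2) :
    Idl a (k + 1) d' ≤ Idl a k 0 := by
  rw [Idl, Ideal.span_le]
  rintro g (⟨μ, hμ, rfl⟩ | ⟨j, rfl⟩)
  · have h1 : k + 1 ≤ dg μ := by
      have : dg μ = k + 2 := hμ
      omega
    exact Ideal.span_mono Set.subset_union_left (monomial_mem_span_monsDeg h1 1)
  · have h1 : v a (k + 1) d' j ∈ W (sHigh (k + 1)) := by
      intro μ hμ
      have := v_mem_W_eq (a := a) (by omega : d' ≤ (k + 1) + 1) j μ hμ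
      exact le_of_eq this.symm
    have h2 := W_high_le_span_monsDeg (k + 1) h1
    exact Ideal.span_mono Set.subset_union_left h2

lemma Fam_step (a : Fin 46 → ℂ) : ∀ (n : ℕ) (h : n + 1 < 23),
    Fam a ⟨n + 1, h⟩ ≤ Fam a ⟨n, by omega⟩ := by
  intro n h
  have hn : n ≤ 21 := by omega
  interval_cases n
  · exact Idl_step_k a 0 1 (by omega)
  · exact Idl_mono_d a 1 1 0 (by omega) (by omega)
  · exact Idl_step_k a 1 2 (by omega)
  · exact Idl_mono_d a 2 2 1 (by omega) (by omega)
  · exact Idl_mono_d a 2 1 0 (by omega) (by omega)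
  · exact Idl_step_k a 2 3 (by omega)
  · exact Idl_mono_d a 3 3 2 (by omega) (by omega)
  · exact Idl_mono_d a 3 2 1 (by omega) (by omega)
  · exact Idl_mono_d a 3 1 0 (by omega) (by omega)
  · exact Idl_step_k a 3 4 (by omega)
  · exact Idl_mono_d a 4 4 3 (by omega) (by omega)
  · exact Idl_mono_d a 4 3 2 (by omega) (by omega)
  · exact Idl_mono_d a 4 2 1 (by omega) (by omega)
  · exact Idl_mono_d a 4 1 0 (by omega) (by omega)
  · exact Idl_step_k a 4 5 (by omega)
  · exact Idl_mono_d a 5 5 4 (by omega) (by omega)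
  · exact Idl_mono_d a 5 4 3 (by omega) (by omega)
  · exact Idl_mono_d a 5 3 2 (by omega) (by omega)
  · exact Idl_mono_d a 5 2 1 (by omega) (by omega)
  · exact Idl_mono_d a 5 1 0 (by omega) (by omega)
  · exact Idl_step_k a 5 6 (by omega)
  · exact Idl_mono_d a 6 6 5 (by omega) (by omega)

lemma Fam_antitone (a : Fin 46 → ℂ) (i k : Fin 23) (h : i ≤ k) : Fam a k ≤ Fam a i := by
  rcases i with ⟨i, hi⟩
  rcases k with ⟨k, hk⟩
  have h' : i ≤ k := h
  clear h
  induction k with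
  | zero =>
      have : i = 0 := by omega
      subst this
      exact le_rfl
  | succ n ih =>
      rcases Nat.lt_or_ge i (n + 1) with hlt | hge
      · exact le_trans (Fam_step a n hk) (ih (by omega) (by omega))
      · have : i = n + 1 := by omega
        subst this
        exact le_rfl

lemma mono_mem_m {μ : D2} (h : 1 ≤ dg μ) (c : ℂ) :
    (monomial μ c : R2) ∈ Ideal.span {(X 0 : R2), X 1} := by
  have := monomial_mem_span_monsDeg h c
  rwa [monsDeg_one] at this

lemma Idl_le_m (a : Fin 46 → ℂ) (k d : ℕ) (hkd : 1 ≤ k ∨ d = 0) (hd : d ≤ k + 1) :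
    Idl a k d ≤ Ideal.span {(X 0 : R2), X 1} := by
  rw [Idl, Ideal.span_le]
  rintro g (⟨μ, hμ, rfl⟩ | ⟨j, rfl⟩)
  · refine mono_mem_m ?_ 1
    have : dg μ = k + 1 := hμ
    omega
  · rcases hkd with hk | rfl
    · have h1 : v a k d j ∈ W (sHigh 1) := by
        intro μ hμ
        have := v_mem_W_eq (a := a) hd j μ hμ
        have h2 : dg μ = k := this
        show 1 ≤ dg μ
        omega
      have h2 := W_high_le_span_monsDeg 1 h1
      rwa [monsDeg_one] at h2
    · exact absurd j.2 (by omega)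

lemma m_pow_le_Idl (a : Fin 46 → ℂ) (k d : ℕ) (hk : k ≤ 6) :
    Ideal.span {(X 0 : R2), X 1} ^ 7 ≤ Idl a k d := by
  refine le_trans (Ideal.pow_le_pow_right (by omega : k + 1 ≤ 7)) ?_
  refine le_trans (m_pow_le_span_monsDeg (k + 1) (by omega)) ?_
  exact Ideal.span_mono Set.subset_union_left

lemma kOf_le (i : Fin 23) : kOf i ≤ 6 := by revert i; decide
lemma dOf_le (i : Fin 23) : dOf i ≤ kOf i + 1 := by revert i; decide
lemma kdOf_pos (i : Fin 23) : 1 ≤ kOf i ∨ dOf i = 0 := by revert i; decide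
lemma colength_eq (i : Fin 23) :
    (kOf i + 1) * (kOf i + 2) / 2 - dOf i = (i : ℕ) + 1 := by revert i; decide


-- ## Part 8 : injectivity

lemma Whigh_inf_Weq (k : ℕ) : W (sHigh (k + 1)) ⊓ W (sEq k) = ⊥ := by
  rw [eq_bot_iff]
  rintro f ⟨h1, h2⟩
  have : f = 0 := by
    ext μ
    by_contra hμ
    have ha : k + 1 ≤ dg μ := h1 μ (by simpa using hμ)
    have hb : dg μ = k := h2 μ (by simpa using hμ)
    omega
  simp [this]

lemma Vspan_eq (a : Fin 46 → ℂ) (k d : ℕ) (hd : d ≤ k + 1) :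
    (Idl a k d).restrictScalars ℂ ⊓ W (sEq k) =
      Submodule.span ℂ (Set.range fun j : Fin d => v a k d j) := by
  rw [Idl_eq_Pmod a k d hd, Pmod, sup_comm,
    sup_inf_assoc_of_le _ (Submodule.span_le.mpr ?_), Whigh_inf_Weq, sup_bot_eq]
  rintro _ ⟨j, rfl⟩
  exact v_mem_W_eq hd j

lemma span_eq_of_Idl_eq (a a' : Fin 46 → ℂ) (k d : ℕ) (hd : d ≤ k + 1)
    (h : Idl a k d = Idl a' k d) :
    Submodule.span ℂ (Set.range fun j : Fin d => v a k d j) =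
      Submodule.span ℂ (Set.range fun j : Fin d => v a' k d j) := by
  rw [← Vspan_eq a k d hd, ← Vspan_eq a' k d hd, h]

lemma step_recover (a a' : Fin 46 → ℂ) (k t : ℕ) (htk : t < k)
    (hu : ∀ j, j < k + 1 - t → u a k t j = u a' k t j)
    (hspan : Submodule.span ℂ (Set.range fun j : Fin (k - t) => u a k (t + 1) (j : ℕ)) =
      Submodule.span ℂ (Set.range fun j : Fin (k - t) => u a' k (t + 1) (j : ℕ))) :
    (∀ j, j < k - t → Pa a k (k - t) j = Pa a' k (k - t) j) ∧
      (∀ j, j < k - t → u a k (t + 1) j = u a' k (t + 1) j) := by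
  have huu : ∀ j, j < k - t → u a k (t + 1) j = u a' k (t + 1) j := by
    intro j hj
    have hmem : u a k (t + 1) j ∈
        Submodule.span ℂ (Set.range fun j' : Fin (k - t) => u a' k (t + 1) (j' : ℕ)) := by
      rw [← hspan]
      exact Submodule.subset_span ⟨⟨j, hj⟩, rfl⟩
    rcases (Submodule.mem_span_range_iff_exists_fun ℂ).mp hmem with ⟨c, hc⟩
    have hcoef : ∀ i : Fin (k - t), c i = if j = (i : ℕ) then 1 else 0 := by
      intro i
      have h1 := congrArg (coeff (E (k - (i : ℕ)) (i : ℕ))) hc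
      rw [coeff_u (t + 1) j (i : ℕ) (by omega) (by omega)] at h1
      rw [coeff_sum] at h1
      rw [Finset.sum_eq_single i] at h1
      · rw [coeff_smul, coeff_u (t + 1) (i : ℕ) (i : ℕ) (by omega) (by omega)] at h1
        simpa using h1
      · intro i' _ hne
        rw [coeff_smul, coeff_u (t + 1) (i' : ℕ) (i : ℕ) (by omega) (by omega)]
        have : (i' : ℕ) ≠ (i : ℕ) := fun he => hne (Fin.ext he)
        simp [this]
      · intro hni
        exact absurd (Finset.mem_univ i) hni
    rw [← hc, Finset.sum_eq_single (⟨j, hj⟩ : Fin (k - t))]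
    · rw [hcoef, if_pos rfl, one_smul]
    · intro i _ hne
      rw [hcoef]
      have : j ≠ (i : ℕ) := fun he => hne.symm (Fin.ext he)
      simp [this]
    · intro hni
      exact absurd (Finset.mem_univ _) hni
  refine ⟨?_, huu⟩
  intro j hj
  have key : ∀ b : Fin 46 → ℂ,
      coeff (E (k - (k - t)) (k - t)) (u b k (t + 1) j) = Pa b k (k - t) j := by
    intro b
    rw [u, coeff_add, coeff_smul,
      coeff_u t j (k - t) (by omega) (by omega),
      coeff_u t (k - t) (k - t) (by omega) (by omega)]
    have : j ≠ k - t := by omega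
    simp [this]
  rw [← key a, ← key a', huu j hj]

lemma level_recover (a a' : Fin 46 → ℂ) (k s : ℕ) (hs : s ≤ k)
    (hspans : ∀ t, t < s →
      Submodule.span ℂ (Set.range fun j : Fin (k - t) => u a k (t + 1) (j : ℕ)) =
        Submodule.span ℂ (Set.range fun j : Fin (k - t) => u a' k (t + 1) (j : ℕ))) :
    ∀ t, t < s → ∀ j, j < k - t → Pa a k (k - t) j = Pa a' k (k - t) j := by
  have hU : ∀ t, t ≤ s → ∀ j, j < k + 1 - t → u a k t j = u a' k t j := by
    intro t
    induction t with
    | zero => intro _ j _; rfl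
    | succ t ih =>
        intro hts j hj
        have h2 := (step_recover a a' k t (by omega) (ih (by omega)) (hspans t (by omega))).2
        exact h2 j (by omega)
  intro t hts j hj
  exact (step_recover a a' k t (by omega) (hU t (by omega)) (hspans t hts)).1 j hj


lemma enc_surj : ∀ x : Fin 46, ∃ k : Fin 7, ∃ d : Fin 7, ∃ j : Fin 7,
    ((1 ≤ (k : ℕ) ∧ (k : ℕ) ≤ 5 ∧ 1 ≤ (d : ℕ) ∧ (d : ℕ) ≤ (k : ℕ)) ∨
      ((k : ℕ) = 6 ∧ ((d : ℕ) = 6 ∨ (d : ℕ) = 5))) ∧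
    (j : ℕ) < (d : ℕ) ∧ encF (k : ℕ) (d : ℕ) (j : ℕ) = x := by decide

lemma Fam_injective : Function.Injective Fam := by
  intro a a' hF
  have hsp : ∀ i : Fin 23,
      Submodule.span ℂ (Set.range fun j : Fin (dOf i) => v a (kOf i) (dOf i) j) =
        Submodule.span ℂ (Set.range fun j : Fin (dOf i) => v a' (kOf i) (dOf i) j) :=
    fun i => span_eq_of_Idl_eq a a' _ _ (dOf_le i) (congrFun hF i)
  have h1 := level_recover a a' 1 1 le_rfl
    (by intro t ht; interval_cases t; · exact hsp 1)
  have h2 := level_recover a a' 2 2 le_rfl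
    (by intro t ht; interval_cases t
        · exact hsp 3
        · exact hsp 4)
  have h3 := level_recover a a' 3 3 le_rfl
    (by intro t ht; interval_cases t
        · exact hsp 6
        · exact hsp 7
        · exact hsp 8)
  have h4 := level_recover a a' 4 4 le_rfl
    (by intro t ht; interval_cases t
        · exact hsp 10
        · exact hsp 11
        · exact hsp 12
        · exact hsp 13)
  have h5 := level_recover a a' 5 5 le_rfl
    (by intro t ht; interval_cases t
        · exact hsp 15
        · exact hsp 16
        · exact hsp 17
        · exact hsp 18
        · exact hsp 19)
  have h6 := level_recover a a' 6 2 (by omega)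
    (by intro t ht; interval_cases t
        · exact hsp 21
        · exact hsp 22)
  have recov : ∀ K D j : ℕ,
      ((1 ≤ K ∧ K ≤ 5 ∧ 1 ≤ D ∧ D ≤ K) ∨ (K = 6 ∧ (D = 6 ∨ D = 5))) → j < D →
      Pa a K D j = Pa a' K D j := by
    rintro K D j (⟨hK1, hK5, hD1, hDK⟩ | ⟨rfl, hD⟩) hj
    · have hcase : K = 1 ∨ K = 2 ∨ K = 3 ∨ K = 4 ∨ K = 5 := by omega
      rcases hcase with rfl | rfl | rfl | rfl | rfl
      · have := h1 (1 - D) (by omega) j (by omega)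
        rwa [show 1 - (1 - D) = D by omega] at this
      · have := h2 (2 - D) (by omega) j (by omega)
        rwa [show 2 - (2 - D) = D by omega] at this
      · have := h3 (3 - D) (by omega) j (by omega)
        rwa [show 3 - (3 - D) = D by omega] at this
      · have := h4 (4 - D) (by omega) j (by omega)
        rwa [show 4 - (4 - D) = D by omega] at this
      · have := h5 (5 - D) (by omega) j (by omega)
        rwa [show 5 - (5 - D) = D by omega] at this
    · rcases hD with rfl | rfl
      · exact h6 0 (by omega) j (by omega)
      · exact h6 1 (by omega) j (by omega)
  funext x
  obtain ⟨k, d, j, hvalid, hj, hx⟩ := enc_surj x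
  rw [← hx]
  exact recov (k : ℕ) (d : ℕ) (j : ℕ) hvalid hj

end S13

/-- With `R = ℂ[x,y]` and `m = (x,y)`, there is an injective map from
`ℂ^46` to chains of ideals of `R`, sending a parameter tuple to a chain
`I_1 ⊇ I_2 ⊇ ⋯ ⊇ I_23` such that for every parameter: (i) `m^7 ⊆ I_i ⊆ m` for all `i`
(so each `I_i` defines a subscheme of `𝔸²` supported only at the origin), and
(ii) `dim_ℂ (ℂ[x,y]/I_i) = i` for `1 ≤ i ≤ 23`.  (Here the chain is indexed by
`Fin 23`, with the `i`-th ideal having colength `i + 1`.) -/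
theorem exists_injective_family_of_punctual_chains :
    ∀ m : Ideal (MvPolynomial (Fin 2) ℂ),
      m = Ideal.span {X 0, X 1} →
      ∃ F : (Fin 46 → ℂ) → (Fin 23 → Ideal (MvPolynomial (Fin 2) ℂ)),
        Function.Injective F ∧
        ∀ a : Fin 46 → ℂ,
          (∀ i k : Fin 23, i ≤ k → F a k ≤ F a i) ∧
          (∀ i : Fin 23, m ^ 7 ≤ F a i ∧ F a i ≤ m) ∧
          (∀ i : Fin 23,
            Module.finrank ℂ (MvPolynomial (Fin 2) ℂ ⧸ F a i) = (i : ℕ) + 1) := by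
  intro m hm
  refine ⟨S13.Fam, S13.Fam_injective, fun a => ⟨?_, ?_, ?_⟩⟩
  · exact fun i k h => S13.Fam_antitone a i k h
  · intro i
    constructor
    · rw [hm]
      exact S13.m_pow_le_Idl a _ _ (S13.kOf_le i)
    · rw [hm]
      exact S13.Idl_le_m a _ _ (S13.kdOf_pos i) (S13.dOf_le i)
  · intro i
    exact (S13.finrank_quotient_Idl a _ _ (S13.dOf_le i)).trans (S13.colength_eq i)
end
end
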